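/- arXiv:1711.00154 — 2 statements merged into one kernel-verified Lean document; each statement's English description precedes it below -/
import Mathlib

section
/- A continuous function F : [0,1] → ℝ satisfies condition (S) if and only if it satisfies interval-(S). -/
open Set MeasureTheory Topology

noncomputable section

/-- `C(I)`: continuous real-valued functions on the unit interval. -/
abbrev CI := C(unitInterval, ℝ)

/-- Oscillation of `F` on the open interval `(a,b)`: `sup_{x,y ∈ (a,b)} |F x - F y|`. -/
noncomputable def osc (F : CI) (a b : unitInterval) : ℝ :=
  sSup {r : ℝ | ∃ x ∈ Set.Ioo a b, ∃ y ∈ Set.Ioo a b, r = |F x - F y|}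

/-- `a₀ ≤ b₀ ≤ a₁ ≤ b₁ ≤ … ≤ a_k ≤ b_k` is a finite non-decreasing sequence of points of `E`. -/
def SeqOn (E : Set unitInterval) (k : ℕ) (a b : ℕ → unitInterval) : Prop :=
  (∀ i ≤ k, a i ∈ E) ∧ (∀ i ≤ k, b i ∈ E) ∧ (∀ i ≤ k, a i ≤ b i) ∧ ∀ i < k, b i ≤ a (i + 1)

/-- `F` is VB on `E`. -/
def IsVBOn (F : CI) (E : Set unitInterval) : Prop :=
  ∃ N : ℝ, ∀ (k : ℕ) (a b : ℕ → unitInterval), SeqOn E k a b →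
    ∑ i ∈ Finset.range (k + 1), |F (b i) - F (a i)| < N

/-- `F` is VB_* on `E`. -/
def IsVBStarOn (F : CI) (E : Set unitInterval) : Prop :=
  ∃ N : ℝ, ∀ (k : ℕ) (a b : ℕ → unitInterval), SeqOn E k a b →
    ∑ i ∈ Finset.range (k + 1), osc F (a i) (b i) < N

/-- `F` is AC on `E`. -/
def IsACOn (F : CI) (E : Set unitInterval) : Prop :=
  ∀ ε : ℝ, 0 < ε → ∃ δ : ℝ, 0 < δ ∧ ∀ (k : ℕ) (a b : ℕ → unitInterval), SeqOn E k a b →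
    (∑ i ∈ Finset.range (k + 1), ((b i : ℝ) - (a i : ℝ))) < δ →
    ∑ i ∈ Finset.range (k + 1), |F (b i) - F (a i)| < ε

/-- `F` is AC_* on `E`. -/
def IsACStarOn (F : CI) (E : Set unitInterval) : Prop :=
  ∀ ε : ℝ, 0 < ε → ∃ δ : ℝ, 0 < δ ∧ ∀ (k : ℕ) (a b : ℕ → unitInterval), SeqOn E k a b →
    (∑ i ∈ Finset.range (k + 1), ((b i : ℝ) - (a i : ℝ))) < δ →
    ∑ i ∈ Finset.range (k + 1), osc F (a i) (b i) < ε

/-- `F ∈ VBG`. -/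
def IsVBG (F : CI) : Prop :=
  ∃ E : ℕ → Set unitInterval, (∀ n, IsClosed (E n)) ∧ (⋃ n, E n) = Set.univ ∧
    ∀ n, IsVBOn F (E n)

/-- `F ∈ VBG_*`. -/
def IsVBGStar (F : CI) : Prop :=
  ∃ E : ℕ → Set unitInterval, (∀ n, IsClosed (E n)) ∧ (⋃ n, E n) = Set.univ ∧
    ∀ n, IsVBStarOn F (E n)

/-- `F ∈ ACG`. -/
def IsACG (F : CI) : Prop :=
  ∃ E : ℕ → Set unitInterval, (∀ n, IsClosed (E n)) ∧ (⋃ n, E n) = Set.univ ∧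
    ∀ n, IsACOn F (E n)

/-- `F ∈ ACG_*`. -/
def IsACGStar (F : CI) : Prop :=
  ∃ E : ℕ → Set unitInterval, (∀ n, IsClosed (E n)) ∧ (⋃ n, E n) = Set.univ ∧
    ∀ n, IsACStarOn F (E n)

/-- Condition (S): for every `ε > 0` there is `δ > 0` such that every `A ⊆ [0,1]` of outer
measure less than `δ` has image of outer measure less than `ε`. -/
def CondS (F : CI) : Prop :=
  ∀ ε : ℝ, 0 < ε → ∃ δ : ℝ, 0 < δ ∧ ∀ A : Set unitInterval,
    volume (Subtype.val '' A) < ENNReal.ofReal δ → volume (F '' A) < ENNReal.ofReal ε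

/-- Interval-(S): for every `ε > 0` there is `δ > 0` such that for every finite non-decreasing
sequence `a₀ ≤ b₀ ≤ … ≤ a_k ≤ b_k` in `[0,1]` with `Σ (b_i - a_i) < δ` whose value intervals
`[F a_i, F b_i]` are pairwise disjoint, `Σ |F b_i - F a_i| ≤ ε`. -/
def IntervalS (F : CI) : Prop :=
  ∀ ε : ℝ, 0 < ε → ∃ δ : ℝ, 0 < δ ∧ ∀ (k : ℕ) (a b : ℕ → unitInterval),
    SeqOn Set.univ k a b →
    (∑ i ∈ Finset.range (k + 1), ((b i : ℝ) - (a i : ℝ))) < δ →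
    (∀ i ≤ k, ∀ j ≤ k, i ≠ j →
      Disjoint (Set.uIcc (F (a i)) (F (b i))) (Set.uIcc (F (a j)) (F (b j)))) →
    ∑ i ∈ Finset.range (k + 1), |F (b i) - F (a i)| ≤ ε

lemma Icc_disj {a b a' b' : ℝ} (h : b < a') : Disjoint (Icc a b) (Icc a' b') := by
  rw [Set.disjoint_left]; rintro x ⟨_, h1⟩ ⟨h2, _⟩; linarith

lemma greedy_aux {ι : Type*} (p q : ι → ℝ) :
    ∀ (n : ℕ) (s : Finset ι), s.card ≤ n → (∀ i ∈ s, p i ≤ q i) → ∀ c : ℝ, (∀ i ∈ s, c < q i) →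
    ∃ t1 t2 : Finset ι, t1 ⊆ s ∧ t2 ⊆ s ∧
      (∀ i ∈ t1, ∀ j ∈ t1, i ≠ j → Disjoint (Icc (p i) (q i)) (Icc (p j) (q j))) ∧
      (∀ i ∈ t2, ∀ j ∈ t2, i ≠ j → Disjoint (Icc (p i) (q i)) (Icc (p j) (q j))) ∧
      ((⋃ i ∈ s, Icc (p i) (q i)) \ Iic c ⊆
        (⋃ i ∈ t1, Icc (p i) (q i)) ∪ ⋃ i ∈ t2, Icc (p i) (q i)) ∧
      (∀ i ∈ t2, c < p i) := by
  classical
  intro n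
  induction n with
  | zero =>
    intro s hs _ c _
    refine ⟨∅, ∅, by simp, by simp, by simp, by simp, ?_, by simp⟩
    have : s = ∅ := Finset.card_eq_zero.mp (Nat.le_zero.mp hs)
    simp [this]
  | succ n ih =>
    intro s hcard hpq c hc
    rcases s.eq_empty_or_nonempty with rfl | hne
    · exact ⟨∅, ∅, by simp, by simp, by simp, by simp, by simp, by simp⟩
    by_cases hR : ∃ i ∈ s, p i ≤ c
    · -- Case A: some interval crosses the cutoff
      obtain ⟨s2, hs2R, hs2max⟩ := Finset.exists_max_image (s.filter (fun i => p i ≤ c)) q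
        (by rcases hR with ⟨i, hi, hpi⟩; exact ⟨i, Finset.mem_filter.mpr ⟨hi, hpi⟩⟩)
      rw [Finset.mem_filter] at hs2R
      obtain ⟨hs2s, hs2p⟩ := hs2R
      set c' := q s2 with hc'
      have hcc' : c < c' := hc s2 hs2s
      set s' := s.filter (fun i => c' < q i) with hs'
      have hs'sub : s' ⊆ s := Finset.filter_subset _ _
      have hs2ns' : s2 ∉ s' := by simp [hs']; exact fun _ => le_rfl
      have hcard' : s'.card ≤ n := by
        have : s'.card < s.card := Finset.card_lt_card ⟨hs'sub, fun h => hs2ns' (h hs2s)⟩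
        omega
      have hps' : ∀ i ∈ s', c < p i := by
        intro i hi
        rw [hs', Finset.mem_filter] at hi
        by_contra h
        push_neg at h
        have := hs2max i (Finset.mem_filter.mpr ⟨hi.1, h⟩)
        exact absurd hi.2 (not_lt.mpr this)
      obtain ⟨t1', t2', ht1s, ht2s, hd1, hd2, hcov, hinv⟩ :=
        ih s' hcard' (fun i hi => hpq i (hs'sub hi)) c'
          (fun i hi => (Finset.mem_filter.mp hi).2)
      refine ⟨insert s2 t2', t1', Finset.insert_subset hs2s (ht2s.trans hs'sub),
        ht1s.trans hs'sub, ?_, hd1, ?_, fun i hi => hps' i (ht1s hi)⟩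
      · intro i hi j hj hij
        rcases Finset.mem_insert.mp hi with rfl | hi' <;>
          rcases Finset.mem_insert.mp hj with rfl | hj'
        · exact absurd rfl hij
        · exact Icc_disj (hinv j hj')
        · exact (Icc_disj (hinv i hi')).symm
        · exact hd2 i hi' j hj' hij
      · intro x hx
        obtain ⟨hx1, hx2⟩ := hx
        simp only [mem_iUnion, exists_prop] at hx1
        obtain ⟨j, hj, hxj⟩ := hx1
        simp only [mem_Iic, not_le] at hx2
        by_cases hxc' : x ≤ c'
        · left
          refine mem_iUnion₂.mpr ⟨s2, Finset.mem_insert_self _ _, ?_⟩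
          exact ⟨le_trans hs2p hx2.le, hxc'⟩
        · push_neg at hxc'
          have hjs' : j ∈ s' := Finset.mem_filter.mpr ⟨hj, lt_of_lt_of_le hxc' hxj.2⟩
          have : x ∈ (⋃ i ∈ s', Icc (p i) (q i)) \ Iic c' := by
            refine ⟨mem_iUnion₂.mpr ⟨j, hjs', hxj⟩, by simpa using hxc'⟩
          rcases hcov this with h | h
          · right; exact h
          · left; exact mem_iUnion₂.mpr (by
              obtain ⟨i, hi, hxi⟩ := mem_iUnion₂.mp h
              exact ⟨i, Finset.mem_insert_of_mem hi, hxi⟩)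
    · -- Case B: all intervals start strictly above the cutoff
      push_neg at hR
      obtain ⟨s1, hs1s, hs1min⟩ := Finset.exists_min_image s p hne
      set c' := q s1 with hc'
      set s' := s.filter (fun i => c' < q i) with hs'
      have hs'sub : s' ⊆ s := Finset.filter_subset _ _
      have hs1ns' : s1 ∉ s' := by simp [hs']; exact fun _ => le_rfl
      have hcard' : s'.card ≤ n := by
        have : s'.card < s.card := Finset.card_lt_card ⟨hs'sub, fun h => hs1ns' (h hs1s)⟩
        omega
      obtain ⟨t1', t2', ht1s, ht2s, hd1, hd2, hcov, hinv⟩ :=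
        ih s' hcard' (fun i hi => hpq i (hs'sub hi)) c'
          (fun i hi => (Finset.mem_filter.mp hi).2)
      refine ⟨t1', insert s1 t2', ht1s.trans hs'sub,
        Finset.insert_subset hs1s (ht2s.trans hs'sub), hd1, ?_, ?_, ?_⟩
      · intro i hi j hj hij
        rcases Finset.mem_insert.mp hi with rfl | hi' <;>
          rcases Finset.mem_insert.mp hj with rfl | hj'
        · exact absurd rfl hij
        · exact Icc_disj (hinv j hj')
        · exact (Icc_disj (hinv i hi')).symm
        · exact hd2 i hi' j hj' hij
      · intro x hx
        obtain ⟨hx1, hx2⟩ := hx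
        simp only [mem_iUnion, exists_prop] at hx1
        obtain ⟨j, hj, hxj⟩ := hx1
        simp only [mem_Iic, not_le] at hx2
        by_cases hxc' : x ≤ c'
        · right
          refine mem_iUnion₂.mpr ⟨s1, Finset.mem_insert_self _ _, ?_⟩
          exact ⟨le_trans (hs1min j hj) hxj.1, hxc'⟩
        · push_neg at hxc'
          have hjs' : j ∈ s' := Finset.mem_filter.mpr ⟨hj, lt_of_lt_of_le hxc' hxj.2⟩
          have : x ∈ (⋃ i ∈ s', Icc (p i) (q i)) \ Iic c' := by
            refine ⟨mem_iUnion₂.mpr ⟨j, hjs', hxj⟩, by simpa using hxc'⟩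
          rcases hcov this with h | h
          · left; exact h
          · right; exact mem_iUnion₂.mpr (by
              obtain ⟨i, hi, hxi⟩ := mem_iUnion₂.mp h
              exact ⟨i, Finset.mem_insert_of_mem hi, hxi⟩)
      · intro i hi
        rcases Finset.mem_insert.mp hi with rfl | hi'
        · exact hR _ hs1s
        · exact hR i (hs'sub (ht2s hi'))

lemma sum_le_of_sep (F : CI) {ι : Type*} {ε δ : ℝ}
    (hP : ∀ (k : ℕ) (a b : ℕ → unitInterval), SeqOn Set.univ k a b →
      (∑ i ∈ Finset.range (k + 1), ((b i : ℝ) - (a i : ℝ))) < δ →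
      (∀ i ≤ k, ∀ j ≤ k, i ≠ j →
        Disjoint (Set.uIcc (F (a i)) (F (b i))) (Set.uIcc (F (a j)) (F (b j)))) →
      ∑ i ∈ Finset.range (k + 1), |F (b i) - F (a i)| ≤ ε)
    (hε : 0 ≤ ε)
    (t : Finset ι) (A B x y : ι → unitInterval)
    (hAB : ∀ i ∈ t, A i ≤ x i ∧ x i ≤ B i ∧ A i ≤ y i ∧ y i ≤ B i)
    (hsep : ∀ i ∈ t, ∀ j ∈ t, i ≠ j → A i < A j → B i ≤ A j)
    (hinj : ∀ i ∈ t, ∀ j ∈ t, i ≠ j → A i ≠ A j)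
    (hsum : ∑ i ∈ t, ((B i : ℝ) - (A i : ℝ)) < δ)
    (hdisj : ∀ i ∈ t, ∀ j ∈ t, i ≠ j →
      Disjoint (Set.uIcc (F (x i)) (F (y i))) (Set.uIcc (F (x j)) (F (y j)))) :
    ∑ i ∈ t, |F (y i) - F (x i)| ≤ ε := by
  classical
  rcases t.eq_empty_or_nonempty with rfl | hne
  · simpa using hε
  have hcard : 0 < t.card := Finset.card_pos.mpr hne
  set k := t.card - 1 with hk
  have hk1 : k + 1 = t.card := by omega
  -- the image of A, sorted
  have hAinj : Set.InjOn A ↑t := fun i hi j hj h => by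
    by_contra hij; exact hinj i hi j hj hij h
  have himcard : (t.image A).card = k + 1 := by
    rw [Finset.card_image_of_injOn hAinj, hk1]
  set e := (t.image A).orderIsoOfFin himcard with he
  -- pick the index realizing each value
  have hex : ∀ m : Fin (k + 1), ∃ i, i ∈ t ∧ A i = (e m : unitInterval) := by
    intro m
    have := (e m).2
    rw [Finset.mem_image] at this
    obtain ⟨i, hi, hAi⟩ := this
    exact ⟨i, hi, hAi⟩
  choose idx hidxt hidxA using hex
  have hidx_inj : Function.Injective idx := by
    intro m m' h
    have : (e m : unitInterval) = e m' := by rw [← hidxA m, ← hidxA m', h]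
    exact_mod_cast e.injective (Subtype.ext this)
  have hidx_surj : ∀ i ∈ t, ∃ m, idx m = i := by
    intro i hi
    have : A i ∈ t.image A := Finset.mem_image_of_mem A hi
    obtain ⟨m, hm⟩ := e.surjective ⟨A i, this⟩
    refine ⟨m, ?_⟩
    by_contra hne'
    exact hinj _ (hidxt m) _ hi hne' (by rw [hidxA m, hm])
  -- strict monotonicity of A ∘ idx
  have hmono : ∀ {m m' : Fin (k + 1)}, m < m' → A (idx m) < A (idx m') := by
    intro m m' h
    rw [hidxA m, hidxA m']
    exact_mod_cast e.strictMono h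
  set a : ℕ → unitInterval := fun n => if h : n < k + 1 then x (idx ⟨n, h⟩) ⊓ y (idx ⟨n, h⟩) else 1
  set b : ℕ → unitInterval := fun n => if h : n < k + 1 then x (idx ⟨n, h⟩) ⊔ y (idx ⟨n, h⟩) else 1
  have ha : ∀ n (h : n < k + 1), a n = x (idx ⟨n, h⟩) ⊓ y (idx ⟨n, h⟩) := by
    intro n h; simp only [a, dif_pos h]
  have hb : ∀ n (h : n < k + 1), b n = x (idx ⟨n, h⟩) ⊔ y (idx ⟨n, h⟩) := by
    intro n h; simp only [b, dif_pos h]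
  have hbounds : ∀ (m : Fin (k + 1)), A (idx m) ≤ a m ∧ (b m : unitInterval) ≤ B (idx m) := by
    intro m
    obtain ⟨h1, h2, h3, h4⟩ := hAB (idx m) (hidxt m)
    constructor
    · rw [ha m m.2]; exact le_inf h1 h3
    · rw [hb m m.2]; exact sup_le h2 h4
  have hseq : SeqOn Set.univ k a b := by
    refine ⟨fun _ _ => trivial, fun _ _ => trivial, ?_, ?_⟩
    · intro i hi
      by_cases h : i < k + 1
      · rw [ha i h, hb i h]; exact inf_le_sup
      · simp only [a, b, dif_neg h]; exact le_refl _
    · intro i hi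
      have h1 : i < k + 1 := by omega
      have h2 : i + 1 < k + 1 := by omega
      have hlt : A (idx ⟨i, h1⟩) < A (idx ⟨i + 1, h2⟩) := hmono (by exact_mod_cast Nat.lt_succ_self i)
      have hBA : B (idx ⟨i, h1⟩) ≤ A (idx ⟨i + 1, h2⟩) :=
        hsep _ (hidxt _) _ (hidxt _) (fun hh => absurd (congrArg A hh) (ne_of_lt hlt)) hlt
      calc b i ≤ B (idx ⟨i, h1⟩) := (hbounds ⟨i, h1⟩).2
        _ ≤ A (idx ⟨i + 1, h2⟩) := hBA
        _ ≤ a (i + 1) := (hbounds ⟨i + 1, h2⟩).1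
  -- transfer sums
  have hbij : ∀ (f : unitInterval → unitInterval → ℝ),
      ∑ n ∈ Finset.range (k + 1), (fun n => if h : n < k + 1 then
        f (x (idx ⟨n, h⟩)) (y (idx ⟨n, h⟩)) else 0) n = ∑ i ∈ t, f (x i) (y i) := by
    intro f
    refine Finset.sum_bij (fun n hn => idx ⟨n, Finset.mem_range.mp hn⟩) ?_ ?_ ?_ ?_
    · intro n hn; exact hidxt _
    · intro n hn m hm h
      have := hidx_inj h
      simpa using congrArg Fin.val this
    · intro i hi
      obtain ⟨m, hm⟩ := hidx_surj i hi
      exact ⟨m.1, Finset.mem_range.mpr m.2, by simpa [Fin.eta] using hm⟩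
    · intro n hn; simp only [dif_pos (Finset.mem_range.mp hn)]
  have hbij' : ∀ (f : ι → ℝ),
      ∑ n ∈ Finset.range (k + 1), (fun n => if h : n < k + 1 then
        f (idx ⟨n, h⟩) else 0) n = ∑ i ∈ t, f i := by
    intro f
    refine Finset.sum_bij (fun n hn => idx ⟨n, Finset.mem_range.mp hn⟩) ?_ ?_ ?_ ?_
    · intro n hn; exact hidxt _
    · intro n hn m hm h
      have := hidx_inj h
      simpa using congrArg Fin.val this
    · intro i hi
      obtain ⟨m, hm⟩ := hidx_surj i hi
      exact ⟨m.1, Finset.mem_range.mpr m.2, by simpa [Fin.eta] using hm⟩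
    · intro n hn; simp only [dif_pos (Finset.mem_range.mp hn)]
  -- sum of lengths is < δ
  have hsum' : ∑ n ∈ Finset.range (k + 1), ((b n : ℝ) - (a n : ℝ)) < δ := by
    have hle : ∀ n ∈ Finset.range (k + 1), ((b n : ℝ) - (a n : ℝ)) ≤
        (fun n => if h : n < k + 1 then
          ((B (idx ⟨n, h⟩) : ℝ) - (A (idx ⟨n, h⟩) : ℝ)) else 0) n := by
      intro n hn
      have h := Finset.mem_range.mp hn
      obtain ⟨h1, h2⟩ := hbounds ⟨n, h⟩
      simp only [dif_pos h]
      have := sub_le_sub (Subtype.coe_le_coe.mpr h2) (Subtype.coe_le_coe.mpr h1)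
      exact this
    calc ∑ n ∈ Finset.range (k + 1), ((b n : ℝ) - (a n : ℝ))
        ≤ _ := Finset.sum_le_sum hle
      _ = ∑ i ∈ t, ((B i : ℝ) - (A i : ℝ)) := hbij' (fun i => ((B i : ℝ) - (A i : ℝ)))
      _ < δ := hsum
  -- value intervals of (a, b) agree with those of (x, y)
  have huIcc : ∀ (m : Fin (k + 1)),
      Set.uIcc (F (a m)) (F (b m)) = Set.uIcc (F (x (idx m))) (F (y (idx m))) := by
    intro m
    rw [ha m m.2, hb m m.2]
    rcases le_total (x (idx ⟨(m : ℕ), m.2⟩)) (y (idx ⟨(m : ℕ), m.2⟩)) with h | h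
    · rw [inf_eq_left.mpr h, sup_eq_right.mpr h]
    · rw [inf_eq_right.mpr h, sup_eq_left.mpr h, Set.uIcc_comm]
  have habs : ∀ (m : Fin (k + 1)),
      |F (b m) - F (a m)| = |F (y (idx m)) - F (x (idx m))| := by
    intro m
    rw [ha m m.2, hb m m.2]
    rcases le_total (x (idx ⟨(m : ℕ), m.2⟩)) (y (idx ⟨(m : ℕ), m.2⟩)) with h | h
    · rw [inf_eq_left.mpr h, sup_eq_right.mpr h]
    · rw [inf_eq_right.mpr h, sup_eq_left.mpr h, abs_sub_comm]
  have hdisj' : ∀ i ≤ k, ∀ j ≤ k, i ≠ j →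
      Disjoint (Set.uIcc (F (a i)) (F (b i))) (Set.uIcc (F (a j)) (F (b j))) := by
    intro i hi j hj hij
    have hi' : i < k + 1 := by omega
    have hj' : j < k + 1 := by omega
    rw [show a i = a (⟨i, hi'⟩ : Fin (k+1)).1 from rfl] at *
    rw [huIcc ⟨i, hi'⟩, huIcc ⟨j, hj'⟩]
    refine hdisj _ (hidxt _) _ (hidxt _) ?_
    intro h
    have := hidx_inj h
    simp at this
    omega
  have := hP k a b hseq hsum' hdisj'
  calc ∑ i ∈ t, |F (y i) - F (x i)|
      = ∑ n ∈ Finset.range (k + 1), (fun n => if h : n < k + 1 then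
          |F (y (idx ⟨n, h⟩)) - F (x (idx ⟨n, h⟩))| else 0) n := (hbij' (fun i => |F (y i) - F (x i)|)).symm
    _ = ∑ n ∈ Finset.range (k + 1), |F (b n) - F (a n)| := by
        refine Finset.sum_congr rfl fun n hn => ?_
        have h := Finset.mem_range.mp hn
        simp only [dif_pos h]
        exact (habs ⟨n, h⟩).symm
    _ ≤ ε := this

lemma finite_stage (F : CI) {ι : Type*} {ε δ : ℝ}
    (hP : ∀ (k : ℕ) (a b : ℕ → unitInterval), SeqOn Set.univ k a b →
      (∑ i ∈ Finset.range (k + 1), ((b i : ℝ) - (a i : ℝ))) < δ →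
      (∀ i ≤ k, ∀ j ≤ k, i ≠ j →
        Disjoint (Set.uIcc (F (a i)) (F (b i))) (Set.uIcc (F (a j)) (F (b j)))) →
      ∑ i ∈ Finset.range (k + 1), |F (b i) - F (a i)| ≤ ε)
    (hε : 0 ≤ ε)
    (t : Finset ι) (A B x y : ι → unitInterval)
    (hAB : ∀ i ∈ t, A i ≤ x i ∧ x i ≤ B i ∧ A i ≤ y i ∧ y i ≤ B i)
    (hsep : ∀ i ∈ t, ∀ j ∈ t, i ≠ j → A i < A j → B i ≤ A j)
    (hinj : ∀ i ∈ t, ∀ j ∈ t, i ≠ j → A i ≠ A j)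
    (hsum : ∑ i ∈ t, ((B i : ℝ) - (A i : ℝ)) < δ) :
    volume (⋃ i ∈ t, Set.uIcc (F (x i)) (F (y i))) ≤
      ENNReal.ofReal ε + ENNReal.ofReal ε := by
  classical
  rcases t.eq_empty_or_nonempty with rfl | hne
  · simp
  set p : ι → ℝ := fun i => F (x i) ⊓ F (y i) with hp
  set q : ι → ℝ := fun i => F (x i) ⊔ F (y i) with hq
  have huIcc : ∀ i, Set.uIcc (F (x i)) (F (y i)) = Icc (p i) (q i) := fun i => rfl
  set c : ℝ := t.inf' hne p - 1 with hcdef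
  have hc : ∀ i ∈ t, c < q i := by
    intro i hi
    have h1 : t.inf' hne p ≤ p i := Finset.inf'_le _ hi
    have h2 : p i ≤ q i := inf_le_sup
    simp only [hcdef]; linarith
  obtain ⟨t1, t2, ht1s, ht2s, hd1, hd2, hcov, -⟩ :=
    greedy_aux p q t.card t le_rfl (fun i _ => inf_le_sup) c hc
  have hcov' : (⋃ i ∈ t, Icc (p i) (q i)) ⊆
      (⋃ i ∈ t1, Icc (p i) (q i)) ∪ ⋃ i ∈ t2, Icc (p i) (q i) := by
    intro z hz
    refine hcov ⟨hz, ?_⟩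
    obtain ⟨i, hi, hzi⟩ := mem_iUnion₂.mp hz
    simp only [mem_Iic, not_le]
    have h1 : t.inf' hne p ≤ p i := Finset.inf'_le _ hi
    have := hzi.1
    simp only [hcdef]; linarith
  have key : ∀ (u : Finset ι), u ⊆ t →
      (∀ i ∈ u, ∀ j ∈ u, i ≠ j → Disjoint (Icc (p i) (q i)) (Icc (p j) (q j))) →
      volume (⋃ i ∈ u, Icc (p i) (q i)) ≤ ENNReal.ofReal ε := by
    intro u hut hd
    have hmeas : volume (⋃ i ∈ u, Icc (p i) (q i)) = ∑ i ∈ u, volume (Icc (p i) (q i)) :=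
      measure_biUnion_finset (fun i hi j hj hij => hd i hi j hj hij)
        (fun i _ => measurableSet_Icc)
    rw [hmeas]
    have : ∀ i ∈ u, volume (Icc (p i) (q i)) = ENNReal.ofReal (q i - p i) := by
      intro i _; rw [Real.volume_Icc]
    rw [Finset.sum_congr rfl this, ← ENNReal.ofReal_sum_of_nonneg
      (fun i _ => sub_nonneg.mpr inf_le_sup)]
    refine ENNReal.ofReal_le_ofReal ?_
    have hqp : ∀ i, q i - p i = |F (y i) - F (x i)| := fun i => max_sub_min_eq_abs _ _
    rw [Finset.sum_congr rfl (fun i _ => hqp i)]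
    refine sum_le_of_sep F hP hε u A B x y (fun i hi => hAB i (hut hi))
      (fun i hi j hj hij => hsep i (hut hi) j (hut hj) hij)
      (fun i hi j hj hij => hinj i (hut hi) j (hut hj) hij) ?_
      (fun i hi j hj hij => by rw [huIcc i, huIcc j]; exact hd i hi j hj hij)
    calc ∑ i ∈ u, ((B i : ℝ) - (A i : ℝ)) ≤ ∑ i ∈ t, ((B i : ℝ) - (A i : ℝ)) := by
          refine Finset.sum_le_sum_of_subset_of_nonneg hut fun i hi _ => ?_
          obtain ⟨h1, h2, -, -⟩ := hAB i hi
          have := h1.trans h2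
          exact sub_nonneg.mpr (Subtype.coe_le_coe.mpr this)
      _ < δ := hsum
  calc volume (⋃ i ∈ t, Set.uIcc (F (x i)) (F (y i)))
      ≤ volume ((⋃ i ∈ t1, Icc (p i) (q i)) ∪ ⋃ i ∈ t2, Icc (p i) (q i)) := by
        refine measure_mono ?_
        simpa only [huIcc] using hcov'
    _ ≤ volume (⋃ i ∈ t1, Icc (p i) (q i)) + volume (⋃ i ∈ t2, Icc (p i) (q i)) :=
        measure_union_le _ _
    _ ≤ ENNReal.ofReal ε + ENNReal.ofReal ε :=
        add_le_add (key t1 ht1s hd1) (key t2 ht2s hd2)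

lemma forward (F : CI) (h : CondS F) : IntervalS F := by
  intro ε hε
  obtain ⟨δ, hδ, hS⟩ := h ε hε
  refine ⟨δ, hδ, ?_⟩
  intro k a b hseq hsum hdisj
  obtain ⟨-, -, hab, -⟩ := hseq
  set A : Set unitInterval := ⋃ i ∈ Finset.range (k + 1), Icc (a i) (b i) with hA
  have hvol : volume (Subtype.val '' A) < ENNReal.ofReal δ := by
    have hsub : Subtype.val '' A ⊆ ⋃ i ∈ Finset.range (k + 1), Icc ((a i : ℝ)) ((b i : ℝ)) := by
      rw [hA, image_iUnion₂]
      refine iUnion₂_mono fun i hi => ?_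
      rintro r ⟨s, hs, rfl⟩
      exact ⟨Subtype.coe_le_coe.mpr hs.1, Subtype.coe_le_coe.mpr hs.2⟩
    calc volume (Subtype.val '' A) ≤ ∑ i ∈ Finset.range (k + 1),
          volume (Icc ((a i : ℝ)) ((b i : ℝ))) :=
            (measure_mono hsub).trans (measure_biUnion_finset_le _ _)
      _ = ∑ i ∈ Finset.range (k + 1), ENNReal.ofReal ((b i : ℝ) - (a i : ℝ)) := by
            refine Finset.sum_congr rfl fun i _ => Real.volume_Icc
      _ = ENNReal.ofReal (∑ i ∈ Finset.range (k + 1), ((b i : ℝ) - (a i : ℝ))) :=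
            (ENNReal.ofReal_sum_of_nonneg (fun i hi => sub_nonneg.mpr
              (Subtype.coe_le_coe.mpr (hab i (by have := Finset.mem_range.mp hi; omega))))).symm
      _ < ENNReal.ofReal δ := (ENNReal.ofReal_lt_ofReal_iff hδ).mpr hsum
  have himg := hS A hvol
  -- lower bound for the image measure
  set G : ℝ → ℝ := fun r => F (projIcc 0 1 zero_le_one r) with hG
  have hGc : Continuous G := F.continuous.comp (continuous_projIcc)
  have hsub2 : ∀ i ≤ k, Set.uIcc (F (a i)) (F (b i)) ⊆ F '' A := by
    intro i hi
    have h1 : Set.uIcc (G ((a i : ℝ))) (G ((b i : ℝ))) ⊆ G '' Set.uIcc ((a i : ℝ)) ((b i : ℝ)) :=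
      intermediate_value_uIcc hGc.continuousOn
    have hGa : G ((a i : ℝ)) = F (a i) := by
      simp only [hG]; rw [Set.projIcc_val]
    have hGb : G ((b i : ℝ)) = F (b i) := by
      simp only [hG]; rw [Set.projIcc_val]
    rw [hGa, hGb] at h1
    refine h1.trans ?_
    rw [Set.uIcc_of_le (Subtype.coe_le_coe.mpr (hab i hi))]
    rintro r ⟨s, hs, rfl⟩
    refine ⟨projIcc 0 1 zero_le_one s, ?_, rfl⟩
    have hmem : projIcc 0 1 zero_le_one s ∈ Icc (a i) (b i) := by
      constructor
      · have := monotone_projIcc zero_le_one (le_of_eq rfl : (a i : ℝ) ≤ (a i : ℝ))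
        calc a i = projIcc 0 1 zero_le_one ((a i : ℝ)) := (Set.projIcc_val _ _).symm
          _ ≤ projIcc 0 1 zero_le_one s := monotone_projIcc zero_le_one hs.1
      · calc projIcc 0 1 zero_le_one s ≤ projIcc 0 1 zero_le_one ((b i : ℝ)) :=
              monotone_projIcc zero_le_one hs.2
          _ = b i := Set.projIcc_val _ _
    exact mem_iUnion₂.mpr ⟨i, Finset.mem_range.mpr (by omega), hmem⟩
  have hlow : ENNReal.ofReal (∑ i ∈ Finset.range (k + 1), |F (b i) - F (a i)|) ≤
      volume (F '' A) := by
    rw [ENNReal.ofReal_sum_of_nonneg (fun i _ => abs_nonneg _)]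
    have : ∀ i ∈ Finset.range (k + 1), ENNReal.ofReal |F (b i) - F (a i)| =
        volume (Set.uIcc (F (a i)) (F (b i))) := by
      intro i _
      rw [Set.uIcc, Real.volume_Icc, max_sub_min_eq_abs]
    rw [Finset.sum_congr rfl this]
    rw [← measure_biUnion_finset (fun i hi j hj hij =>
      hdisj i (by simp only [Finset.coe_range, mem_Iio] at hi; omega)
        j (by simp only [Finset.coe_range, mem_Iio] at hj; omega) hij)
      (fun i _ => measurableSet_uIcc)]
    · exact measure_mono (iUnion₂_subset fun i hi => hsub2 i (by
        have := Finset.mem_range.mp hi; omega))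
  have := lt_of_le_of_lt hlow himg
  exact le_of_lt ((ENNReal.ofReal_lt_ofReal_iff hε).mp this)

/-- The left endpoint of a component, clipped to `[0,1]`, as a point of `unitInterval`. -/
noncomputable def clipL (C : Set ℝ) : unitInterval :=
  ⟨max (min (sInf C) 1) 0, le_max_right _ _, max_le (min_le_right _ _) zero_le_one⟩

noncomputable def clipR (C : Set ℝ) : unitInterval :=
  ⟨min (max (sSup C) 0) 1, le_min (le_max_right _ _) zero_le_one, min_le_right _ _⟩

lemma isCompact_Icc_unit (a b : unitInterval) : IsCompact (Set.Icc a b) := by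
  have : Set.Icc a b = Subtype.val ⁻¹' (Set.Icc (a:ℝ) (b:ℝ)) := by
    ext x; simp [Set.mem_Icc, ← Subtype.coe_le_coe]
  rw [this]
  exact (IsClosed.preimage continuous_subtype_val isClosed_Icc).isCompact

/-- min and max points of `F` on `Icc (clipL C) (clipR C)` (junk values if empty). -/
lemma exists_minmax (F : CI) (C : Set ℝ) :
    ∃ u v : unitInterval, clipL C ≤ clipR C →
      (u ∈ Set.Icc (clipL C) (clipR C) ∧ v ∈ Set.Icc (clipL C) (clipR C) ∧
        ∀ w ∈ Set.Icc (clipL C) (clipR C), F u ≤ F w ∧ F w ≤ F v) := by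
  by_cases h : clipL C ≤ clipR C
  · have hne : (Set.Icc (clipL C) (clipR C)).Nonempty := Set.nonempty_Icc.mpr h
    obtain ⟨u, hu, humin⟩ := (isCompact_Icc_unit _ _).exists_isMinOn hne
      F.continuous.continuousOn
    obtain ⟨v, hv, hvmax⟩ := (isCompact_Icc_unit _ _).exists_isMaxOn hne
      F.continuous.continuousOn
    exact ⟨u, v, fun _ => ⟨hu, hv, fun w hw => ⟨humin hw, hvmax hw⟩⟩⟩
  · exact ⟨0, 0, fun h' => absurd h' h⟩

lemma backward (F : CI) (h : IntervalS F) : CondS F := by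
  classical
  intro ε hε
  obtain ⟨δ, hδ, hP⟩ := h (ε/3) (by linarith)
  refine ⟨δ, hδ, ?_⟩
  intro A hvolA
  obtain ⟨U, hUS, hUopen, hUvol⟩ := Set.exists_isOpen_lt_of_lt _ _ hvolA
  set V := U ∩ Ioo (-1 : ℝ) 2 with hV
  have hVopen : IsOpen V := hUopen.inter isOpen_Ioo
  have hVvol : volume V < ENNReal.ofReal δ :=
    lt_of_le_of_lt (measure_mono inter_subset_left) hUvol
  set S := Subtype.val '' A with hS
  have hSV : S ⊆ V := by
    rintro r ⟨s, hs, rfl⟩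
    exact ⟨hUS ⟨s, hs, rfl⟩, by constructor <;> [linarith [s.2.1]; linarith [s.2.2]]⟩
  set 𝒞 : Set (Set ℝ) := {C | ∃ r ∈ S, C = connectedComponentIn V r} with h𝒞
  obtain ⟨xC, yC, hxy⟩ : ∃ x y : Set ℝ → unitInterval, ∀ C, clipL C ≤ clipR C →
      (x C ∈ Set.Icc (clipL C) (clipR C) ∧ y C ∈ Set.Icc (clipL C) (clipR C) ∧
        ∀ w ∈ Set.Icc (clipL C) (clipR C), F (x C) ≤ F w ∧ F w ≤ F (y C)) := by
    have := fun C => exists_minmax F C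
    choose x y hxy using this
    exact ⟨x, y, hxy⟩
  -- basic properties of components
  have hcomp : ∀ C ∈ 𝒞, IsOpen C ∧ C ⊆ V ∧
      Ioo (sInf C) (sSup C) ⊆ C ∧ C ⊆ Icc (sInf C) (sSup C) ∧
      sInf C < sSup C ∧ 0 < sSup C ∧ sInf C < 1 ∧
      ((clipL C : ℝ) = max (sInf C) 0) ∧ ((clipR C : ℝ) = min (sSup C) 1) ∧
      clipL C ≤ clipR C := by
    rintro C ⟨r, hrS, rfl⟩
    set C := connectedComponentIn V r with hC
    have hrV : r ∈ V := hSV hrS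
    have hrC : r ∈ C := mem_connectedComponentIn hrV
    have hCopen : IsOpen C := hUopen.inter isOpen_Ioo |>.connectedComponentIn
    have hCV : C ⊆ V := connectedComponentIn_subset _ _
    have hCne : C.Nonempty := ⟨r, hrC⟩
    have hbdd : BddAbove C ∧ BddBelow C := by
      constructor
      · exact ⟨2, fun x hx => ((hCV hx).2.2).le⟩
      · exact ⟨-1, fun x hx => ((hCV hx).2.1).le⟩
    have hord : C.OrdConnected := isPreconnected_connectedComponentIn.ordConnected
    have hIcc : C ⊆ Icc (sInf C) (sSup C) := fun x hx =>
      ⟨csInf_le hbdd.2 hx, le_csSup hbdd.1 hx⟩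
    have hIoo : Ioo (sInf C) (sSup C) ⊆ C := by
      rintro t ⟨ht1, ht2⟩
      obtain ⟨w, hwC, hwt⟩ := exists_lt_of_csInf_lt hCne ht1
      obtain ⟨u, huC, htu⟩ := exists_lt_of_lt_csSup hCne ht2
      exact hord.out hwC huC ⟨hwt.le, htu.le⟩
    obtain ⟨η, hη, hball⟩ := Metric.isOpen_iff.mp hCopen r hrC
    have hball' : Ioo (r - η) (r + η) ⊆ C := by rw [← Real.ball_eq_Ioo]; exact hball
    have hd : r + η / 2 ≤ sSup C := le_csSup hbdd.1 (hball' ⟨by linarith, by linarith⟩)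
    have hc : sInf C ≤ r - η / 2 := csInf_le hbdd.2 (hball' ⟨by linarith, by linarith⟩)
    have hr01 : (0 : ℝ) ≤ r ∧ r ≤ 1 := by
      obtain ⟨s, hs, rfl⟩ := hrS
      exact ⟨s.2.1, s.2.2⟩
    have h1 : sInf C < sSup C := by linarith
    have h2 : 0 < sSup C := by linarith [hr01.1]
    have h3 : sInf C < 1 := by linarith [hr01.2]
    have hL : (clipL C : ℝ) = max (sInf C) 0 := by
      simp only [clipL]
      rw [min_eq_left h3.le]
    have hR : (clipR C : ℝ) = min (sSup C) 1 := by
      simp only [clipR]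
      rw [max_eq_left h2.le]
    have hLR : clipL C ≤ clipR C := by
      rw [← Subtype.coe_le_coe, hL, hR]
      refine max_le (le_min ?_ h3.le) (le_min h2.le zero_le_one)
      linarith
    exact ⟨hCopen, hCV, hIoo, hIcc, h1, h2, h3, hL, hR, hLR⟩
  -- pairwise facts
  have hdisjC : ∀ C ∈ 𝒞, ∀ C' ∈ 𝒞, C ≠ C' → Disjoint C C' := by
    rintro C ⟨r, hrS, rfl⟩ C' ⟨r', hrS', rfl⟩ hne
    rw [Set.disjoint_left]
    intro z hz hz'
    exact hne ((connectedComponentIn_eq hz).trans (connectedComponentIn_eq hz').symm)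
  have hsep𝒞 : ∀ C ∈ 𝒞, ∀ C' ∈ 𝒞, C ≠ C' → clipL C < clipL C' → clipR C ≤ clipL C' := by
    intro C hC C' hC' hne hlt
    obtain ⟨-, -, hIoo, -, h1, h2, h3, hL, hR, -⟩ := hcomp C hC
    obtain ⟨-, -, hIoo', -, h1', h2', h3', hL', hR', -⟩ := hcomp C' hC'
    by_contra hcon
    push_neg at hcon
    rw [← Subtype.coe_lt_coe, hL', hR] at hcon
    rw [← Subtype.coe_lt_coe, hL, hL'] at hlt
    -- clipL C' > 0 hence = sInf C'
    have hc'pos : (0:ℝ) < max (sInf C') 0 := lt_of_le_of_lt (le_max_right _ _) hlt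
    have hc' : max (sInf C') 0 = sInf C' := by
      rcases max_cases (sInf C') 0 with ⟨h, _⟩ | ⟨h, hh⟩
      · exact h
      · rw [h] at hc'pos; linarith
    set t := (sInf C' + min (min (sSup C) (sSup C')) 1) / 2 with ht
    have htlb : sInf C' < min (min (sSup C) (sSup C')) 1 := by
      rw [hc'] at hcon hlt
      refine lt_min (lt_min ?_ h1') ?_
      · exact lt_of_lt_of_le hcon (min_le_left _ _)
      · exact lt_of_lt_of_le hcon (min_le_right _ _)
    have htC' : t ∈ C' := hIoo' ⟨by rw [ht]; linarith,
      by rw [ht]; have := min_le_left (min (sSup C) (sSup C')) 1;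
         have := min_le_right (sSup C) (sSup C'); linarith [htlb]⟩
    have htC : t ∈ C := by
      refine hIoo ⟨?_, ?_⟩
      · rw [hc'] at hlt
        have : sInf C ≤ max (sInf C) 0 := le_max_left _ _
        rw [ht]; linarith
      · rw [ht]
        have h5 := min_le_left (min (sSup C) (sSup C')) 1
        have h6 := min_le_left (sSup C) (sSup C')
        linarith [htlb]
    exact absurd htC' (Set.disjoint_left.mp (hdisjC C hC C' hC' hne) htC)
  have hinj𝒞 : ∀ C ∈ 𝒞, ∀ C' ∈ 𝒞, C ≠ C' → clipL C ≠ clipL C' := by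
    intro C hC C' hC' hne heq
    obtain ⟨-, -, hIoo, -, h1, h2, h3, hL, hR, -⟩ := hcomp C hC
    obtain ⟨-, -, hIoo', -, h1', h2', h3', hL', hR', -⟩ := hcomp C' hC'
    have heq' : max (sInf C) 0 = max (sInf C') 0 := by
      rw [← hL, ← hL', heq]
    set α := max (sInf C) 0 with hα
    have hαd : α < min (min (sSup C) (sSup C')) 1 := by
      refine lt_min (lt_min ?_ ?_) ?_
      · rcases max_cases (sInf C) 0 with ⟨hh, _⟩ | ⟨hh, _⟩ <;> rw [hα, hh] <;> linarith
      · rw [heq']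
        rcases max_cases (sInf C') 0 with ⟨hh, _⟩ | ⟨hh, _⟩ <;> rw [hh] <;> linarith
      · rcases max_cases (sInf C) 0 with ⟨hh, _⟩ | ⟨hh, _⟩ <;> rw [hα, hh] <;> linarith
    set t := (α + min (min (sSup C) (sSup C')) 1) / 2 with ht
    have htC : t ∈ C := by
      refine hIoo ⟨?_, ?_⟩
      · have : sInf C ≤ α := le_max_left _ _
        rw [ht]; linarith
      · rw [ht]
        have h5 := min_le_left (min (sSup C) (sSup C')) 1
        have h6 := min_le_left (sSup C) (sSup C')
        linarith
    have htC' : t ∈ C' := by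
      refine hIoo' ⟨?_, ?_⟩
      · have : sInf C' ≤ α := by rw [heq']; exact le_max_left _ _
        rw [ht]; linarith
      · rw [ht]
        have h5 := min_le_left (min (sSup C) (sSup C')) 1
        have h6 := min_le_right (sSup C) (sSup C')
        linarith
    exact absurd htC' (Set.disjoint_left.mp (hdisjC C hC C' hC' hne) htC)
  -- image of A is covered by the value intervals of components
  have hcover : F '' A ⊆ ⋃ C ∈ 𝒞, Set.uIcc (F (xC C)) (F (yC C)) := by
    rintro z ⟨s, hsA, rfl⟩
    set C := connectedComponentIn V (s : ℝ) with hCdef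
    have hC𝒞 : C ∈ 𝒞 := ⟨s, ⟨s, hsA, rfl⟩, rfl⟩
    obtain ⟨-, -, -, hIcc, h1, h2, h3, hL, hR, hLR⟩ := hcomp C hC𝒞
    have hsC : (s : ℝ) ∈ C := mem_connectedComponentIn (hSV ⟨s, hsA, rfl⟩)
    have hsIcc : s ∈ Set.Icc (clipL C) (clipR C) := by
      constructor
      · rw [← Subtype.coe_le_coe, hL]
        exact max_le (hIcc hsC).1 s.2.1
      · rw [← Subtype.coe_le_coe, hR]
        exact le_min (hIcc hsC).2 s.2.2
    obtain ⟨hu, hv, hmm⟩ := hxy C hLR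
    obtain ⟨hFs1, hFs2⟩ := hmm s hsIcc
    have hxy' : F (xC C) ≤ F (yC C) := le_trans hFs1 hFs2
    refine mem_iUnion₂.mpr ⟨C, hC𝒞, ?_⟩
    rw [Set.uIcc_of_le hxy']
    exact ⟨hFs1, hFs2⟩
  -- countability of the components
  have hcount : 𝒞.Countable := by
    refine Set.PairwiseDisjoint.countable_of_isOpen (s := id) ?_ ?_ ?_
    · intro C hC C' hC' hne
      exact hdisjC C hC C' hC' hne
    · intro C hC; exact (hcomp C hC).1
    · rintro C ⟨r, hrS, rfl⟩
      exact ⟨r, mem_connectedComponentIn (hSV hrS)⟩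
  rcases 𝒞.eq_empty_or_nonempty with h𝒞e | h𝒞ne
  · have : F '' A = ∅ := by
      rw [h𝒞e] at hcover
      simpa using subset_empty_iff.mp (by simpa using hcover)
    rw [this, measure_empty]
    exact ENNReal.ofReal_pos.mpr hε
  obtain ⟨g, hg⟩ := hcount.exists_eq_range h𝒞ne
  -- finite stages
  have hstage : ∀ N : ℕ, volume (⋃ n ∈ Finset.range N, Set.uIcc (F (xC (g n))) (F (yC (g n))))
      ≤ ENNReal.ofReal (ε/3) + ENNReal.ofReal (ε/3) := by
    intro N
    set 𝒮 : Finset (Set ℝ) := (Finset.range N).image g with h𝒮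
    have h𝒮𝒞 : ∀ C ∈ 𝒮, C ∈ 𝒞 := by
      intro C hC
      rw [h𝒮, Finset.mem_image] at hC
      obtain ⟨n, -, rfl⟩ := hC
      rw [hg]; exact mem_range_self n
    have hUeq : (⋃ n ∈ Finset.range N, Set.uIcc (F (xC (g n))) (F (yC (g n)))) =
        ⋃ C ∈ 𝒮, Set.uIcc (F (xC C)) (F (yC C)) := by
      ext z
      simp only [mem_iUnion, exists_prop, h𝒮, Finset.mem_image]
      constructor
      · rintro ⟨n, hn, hz⟩; exact ⟨g n, ⟨n, hn, rfl⟩, hz⟩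
      · rintro ⟨C, ⟨n, hn, rfl⟩, hz⟩; exact ⟨n, hn, hz⟩
    rw [hUeq]
    refine finite_stage F hP (by linarith) 𝒮 clipL clipR xC yC ?_ ?_ ?_ ?_
    · intro C hC
      obtain ⟨-, -, -, -, -, -, -, -, -, hLR⟩ := hcomp C (h𝒮𝒞 C hC)
      obtain ⟨hu, hv, -⟩ := hxy C hLR
      exact ⟨hu.1, hu.2, hv.1, hv.2⟩
    · intro C hC C' hC' hne
      exact hsep𝒞 C (h𝒮𝒞 C hC) C' (h𝒮𝒞 C' hC') hne
    · intro C hC C' hC' hne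
      exact hinj𝒞 C (h𝒮𝒞 C hC) C' (h𝒮𝒞 C' hC') hne
    · -- sum of lengths < δ
      have hterm : ∀ C ∈ 𝒮, ((clipR C : ℝ) - (clipL C : ℝ)) ≤ sSup C - sInf C := by
        intro C hC
        obtain ⟨-, -, -, -, h1, -, -, hL, hR, -⟩ := hcomp C (h𝒮𝒞 C hC)
        rw [hL, hR]
        have := le_max_left (sInf C) 0
        have := min_le_left (sSup C) 1
        linarith
      have hterm2 : ∀ C ∈ 𝒮, (0:ℝ) ≤ sSup C - sInf C := by
        intro C hC
        obtain ⟨-, -, -, -, h1, -⟩ := hcomp C (h𝒮𝒞 C hC)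
        linarith
      have hsum2 : ∑ C ∈ 𝒮, (sSup C - sInf C) < δ := by
        have hmeaseq : ENNReal.ofReal (∑ C ∈ 𝒮, (sSup C - sInf C)) =
            volume (⋃ C ∈ 𝒮, Ioo (sInf C) (sSup C)) := by
          rw [ENNReal.ofReal_sum_of_nonneg hterm2]
          rw [measure_biUnion_finset ?_ (fun C _ => measurableSet_Ioo)]
          · exact Finset.sum_congr rfl fun C _ => (Real.volume_Ioo).symm
          · intro C hC C' hC' hne
            have hdj := hdisjC C (h𝒮𝒞 C hC) C' (h𝒮𝒞 C' hC') hne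
            have h1 := (hcomp C (h𝒮𝒞 C hC)).2.2.1
            have h2 := (hcomp C' (h𝒮𝒞 C' hC')).2.2.1
            exact Set.disjoint_of_subset h1 h2 hdj
        have hle : volume (⋃ C ∈ 𝒮, Ioo (sInf C) (sSup C)) ≤ volume V := by
          refine measure_mono (iUnion₂_subset fun C hC => ?_)
          exact (hcomp C (h𝒮𝒞 C hC)).2.2.1.trans (hcomp C (h𝒮𝒞 C hC)).2.1
        have := lt_of_le_of_lt (hmeaseq ▸ hle) hVvol
        exact (ENNReal.ofReal_lt_ofReal_iff hδ).mp this
      calc ∑ C ∈ 𝒮, ((clipR C : ℝ) - (clipL C : ℝ)) ≤ ∑ C ∈ 𝒮, (sSup C - sInf C) :=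
            Finset.sum_le_sum hterm
        _ < δ := hsum2
  -- pass to the limit
  have hlim : volume (F '' A) ≤ ENNReal.ofReal (ε/3) + ENNReal.ofReal (ε/3) := by
    have hcov2 : F '' A ⊆ ⋃ N : ℕ, ⋃ n ∈ Finset.range N, Set.uIcc (F (xC (g n))) (F (yC (g n))) := by
      refine hcover.trans ?_
      rw [hg]
      rintro z hz
      obtain ⟨C, hC, hzC⟩ := mem_iUnion₂.mp hz
      obtain ⟨n, rfl⟩ := hC
      exact mem_iUnion.mpr ⟨n + 1, mem_iUnion₂.mpr ⟨n, Finset.mem_range.mpr (by omega), hzC⟩⟩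
    refine (measure_mono hcov2).trans ?_
    rw [Directed.measure_iUnion ?_]
    · exact iSup_le fun N => hstage N
    · intro N M
      refine ⟨max N M, ?_, ?_⟩ <;>
        refine iUnion₂_mono' fun n hn => ⟨n, Finset.mem_range.mpr ?_, subset_refl _⟩ <;>
        · have := Finset.mem_range.mp hn; omega
  calc volume (F '' A) ≤ ENNReal.ofReal (ε/3) + ENNReal.ofReal (ε/3) := hlim
    _ = ENNReal.ofReal (ε/3 + ε/3) := (ENNReal.ofReal_add (by linarith) (by linarith)).symm
    _ < ENNReal.ofReal ε := (ENNReal.ofReal_lt_ofReal_iff hε).mpr (by linarith)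

/-- A continuous function on `[0,1]` satisfies condition (S) iff it satisfies interval-(S). -/
theorem condS_iff_intervalS (F : CI) : CondS F ↔ IntervalS F :=
  ⟨forward F, backward F⟩
end
end

section
/- There is a continuous map T ↦ S_T from the space of trees on ℕ to the space of pruned binary trees satisfying: (1) if T is ill-founded, then [S_T] contains a nonempty perfect subset of 2^ℕ; and (2) if T is well-founded with |T|_ls = α, then [S_T] is countable and the Cantor–Bendixson rank of S_T equals α. -/
open Set MeasureTheory Topology

noncomputable section

/-- The space of trees on ℕ: subsets of `ℕ^{<ℕ}` (as characteristic functions, giving the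
subspace topology from Cantor space) closed under initial segments. -/
abbrev TreeSpace : Type :=
  {T : List ℕ → Bool // ∀ σ τ : List ℕ, T σ = true → τ <+: σ → T τ = true}

/-- The set of sequences of a tree. -/
def treeSet (T : TreeSpace) : Set (List ℕ) := {σ | T.1 σ = true}

/-- A set of finite sequences is well-founded if no `x ∈ ℕ^ℕ` has all initial segments in it. -/
def WFTree (A : Set (List ℕ)) : Prop :=
  ¬ ∃ x : ℕ → ℕ, ∀ n : ℕ, (List.ofFn fun i : Fin n => x i) ∈ A

/-- `T_n = {σ : n⌢σ ∈ T}`. -/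
def subAt (A : Set (List ℕ)) (n : ℕ) : Set (List ℕ) := {σ | n :: σ ∈ A}

/-- The graph of the limsup rank on well-founded trees: `LsRank T α` holds iff `T` is
well-founded with `|T|_ls = α`, where `|∅|_ls = 0` and for `T ≠ ∅`,
`|T|_ls = max(sup_n |T_n|_ls, (limsup_n |T_n|_ls) + 1)`,
with `limsup_n γ_n = inf_N sup_{n ≥ N} γ_n`. -/
inductive LsRank : Set (List ℕ) → Ordinal → Prop
  | empty : LsRank ∅ 0
  | node {T : Set (List ℕ)} (hT : T ≠ ∅) {r : ℕ → Ordinal}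
      (h : ∀ n, LsRank (subAt T n) (r n)) :
      LsRank T (max (⨆ n, r n) ((⨅ N, ⨆ n, r (N + n)) + 1))

/-- The set of infinite branches of a set of finite binary sequences. -/
def branches (S : Set (List Bool)) : Set (ℕ → Bool) :=
  {x | ∀ n : ℕ, (List.ofFn fun i : Fin n => x i) ∈ S}

/-- `x` is an isolated point of `C ⊆ 2^ℕ`. -/
def IsIsolatedIn (C : Set (ℕ → Bool)) (x : ℕ → Bool) : Prop :=
  ∃ U : Set (ℕ → Bool), IsOpen U ∧ U ∩ C = {x}

/-- Cantor–Bendixson derivative: the initial segments of non-isolated branches of `S`. -/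
def CBDer (S : Set (List Bool)) : Set (List Bool) :=
  {σ | ∃ x, x ∈ branches S ∧ ¬ IsIsolatedIn (branches S) x ∧
    ∃ n : ℕ, σ = List.ofFn fun i : Fin n => x i}

/-- Iterated Cantor–Bendixson derivative `D^α(S)`. -/
noncomputable def CBIter (S : Set (List Bool)) (α : Ordinal) : Set (List Bool) :=
  Ordinal.limitRecOn (motive := fun _ => Set (List Bool)) α S
    (fun _ P => CBDer P)
    (fun o _ IH => ⋂ (β : Ordinal), ⋂ (_ : β < o), IH β ‹β < o›)

/-- The space of pruned binary trees, as a subspace of the Cantor space of subsets of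
`{0,1}^{<ℕ}`. -/
abbrev BinTreeSpace : Type :=
  {S : List Bool → Bool // (∀ σ τ : List Bool, S σ = true → τ <+: σ → S τ = true) ∧
    ∀ σ : List Bool, S σ = true → ∃ b : Bool, S (σ ++ [b]) = true}

/-- The set of sequences of a pruned binary tree. -/
def binSet (S : BinTreeSpace) : Set (List Bool) := {σ | S.1 σ = true}



namespace CBP

def go : List Bool → ℕ → List ℕ → List ℕ
  | [], _, acc => acc.reverse
  | false :: u, n, acc => go u (n+1) acc
  | [true], n, acc => (n :: acc).reverse
  | true :: _ :: v, n, acc => go v 0 (n :: acc)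

def dec (u : List Bool) : List ℕ := go u 0 []

theorem go_acc (u : List Bool) (n : ℕ) (acc : List ℕ) :
    go u n acc = acc.reverse ++ go u n [] := by
  match u with
  | [] => simp [go]
  | false :: u => show go u (n+1) acc = _ ; rw [go_acc u (n+1) acc]; rfl
  | [true] => simp [go]
  | true :: c :: v =>
      show go v 0 (n :: acc) = acc.reverse ++ go v 0 [n]
      rw [go_acc v 0 (n :: acc), go_acc v 0 [n]]
      simp
termination_by u.length

theorem go_append_false (u : List Bool) (n : ℕ) (acc : List ℕ) :
    go (u ++ [false]) n acc = go u n acc := by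
  induction u, n, acc using go.induct with
  | case1 n acc => simp [go]
  | case2 u n acc ih => simpa [go] using ih
  | case3 n acc => simp [go]
  | case4 c v n acc ih => simpa [go] using ih

theorem go_prefix_append (u : List Bool) (n : ℕ) (acc : List ℕ) (b : Bool) :
    go u n acc <+: go (u ++ [b]) n acc := by
  induction u, n, acc using go.induct with
  | case1 n acc => cases b <;> simp [go]
  | case2 u n acc ih => simpa [go] using ih
  | case3 n acc => cases b <;> simp [go]
  | case4 c v n acc ih => simpa [go] using ih

theorem dec_prefix {u v : List Bool} (h : u <+: v) : dec u <+: dec v := by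
  obtain ⟨w, rfl⟩ := h
  induction w using List.reverseRecOn with
  | nil => simp
  | append_singleton w b ih =>
      rw [← List.append_assoc]
      exact ih.trans (go_prefix_append (u ++ w) 0 [] b)

theorem dec_append_false (u : List Bool) : dec (u ++ [false]) = dec u :=
  go_append_false u 0 []

end CBP

namespace CBP

theorem go_replicate (k : ℕ) (u : List Bool) (n : ℕ) (acc : List ℕ) :
    go (List.replicate k false ++ u) n acc = go u (n + k) acc := by
  induction k generalizing n with
  | zero => simp
  | succ k ih =>
      rw [List.replicate_succ]
      show go (List.replicate k false ++ u) (n+1) acc = _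
      rw [ih (n+1)]
      ring_nf

theorem dec_replicate (k : ℕ) : dec (List.replicate k false) = [] := by
  have := go_replicate k [] 0 []
  simpa [go, dec] using this

theorem dec_block (n : ℕ) (b : Bool) (v : List Bool) :
    dec (List.replicate n false ++ true :: b :: v) = n :: dec v := by
  unfold dec
  rw [go_replicate, Nat.zero_add]
  show go (true :: b :: v) n [] = n :: go v 0 []
  rw [show go (true :: b :: v) n [] = go v 0 [n] from rfl, go_acc v 0 [n]]
  simp

theorem dec_block1 (n : ℕ) : dec (List.replicate n false ++ [true]) = [n] := by
  unfold dec
  rw [go_replicate, Nat.zero_add]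
  simp [go]

/-- finite initial segment of an infinite sequence -/
def seg (x : ℕ → Bool) (n : ℕ) : List Bool := List.ofFn fun i : Fin n => x i

theorem seg_succ (x : ℕ → Bool) (n : ℕ) : seg x (n+1) = seg x n ++ [x n] := by
  rw [seg, List.ofFn_succ']
  simp [seg, List.concat_eq_append]

@[simp] theorem seg_length (x : ℕ → Bool) (n : ℕ) : (seg x n).length = n := by
  simp [seg]

theorem seg_eq_iff {x y : ℕ → Bool} {n : ℕ} :
    seg x n = seg y n ↔ ∀ i < n, x i = y i := by
  constructor
  · intro h i hi
    have h2 := congrArg (fun l => l[i]?) h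
    simpa [seg, List.getElem?_ofFn, hi] using h2
  · intro h
    apply List.ext_getElem (by simp)
    intro i h1 h2
    simp only [seg, List.getElem_ofFn]
    exact h i (by simpa using h1)

end CBP

namespace CBP

def CC (A : Set (List ℕ)) : Set (ℕ → Bool) := {x | ∀ n, dec (seg x n) ∈ A}

def PC (A : Set (List ℕ)) : Prop := ∀ σ τ : List ℕ, σ ∈ A → τ <+: σ → τ ∈ A

def zfun : ℕ → Bool := fun _ => false

def emb (n : ℕ) (b : Bool) (y : ℕ → Bool) : ℕ → Bool := fun i =>
  if i < n then false else if i = n then true else if i = n + 1 then b else y (i - n - 2)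

theorem emb_lt {n i : ℕ} (h : i < n) (b : Bool) (y : ℕ → Bool) : emb n b y i = false := by
  simp [emb, h]

@[simp] theorem emb_self (n : ℕ) (b : Bool) (y : ℕ → Bool) : emb n b y n = true := by
  simp [emb]

@[simp] theorem emb_succ (n : ℕ) (b : Bool) (y : ℕ → Bool) : emb n b y (n+1) = b := by
  simp [emb]

@[simp] theorem emb_tail (n : ℕ) (b : Bool) (y : ℕ → Bool) (i : ℕ) :
    emb n b y (n + 2 + i) = y i := by
  have h1 : ¬ (n + 2 + i < n) := by omega
  have h2 : ¬ (n + 2 + i = n) := by omega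
  have h3 : ¬ (n + 2 + i = n + 1) := by omega
  have h4 : n + 2 + i - n - 2 = i := by omega
  simp [emb, h1, h2, h3, h4]

theorem seg_zfun (m : ℕ) : seg zfun m = List.replicate m false := by
  induction m with
  | zero => simp [seg]
  | succ m ih => rw [seg_succ, ih, zfun]; simp [List.replicate_succ']

theorem seg_emb_le {n : ℕ} (b : Bool) (y : ℕ → Bool) {m : ℕ} (h : m ≤ n) :
    seg (emb n b y) m = List.replicate m false := by
  induction m with
  | zero => simp [seg]
  | succ m ih =>
      rw [seg_succ, ih (by omega), emb_lt (by omega), List.replicate_succ']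

theorem seg_emb_one (n : ℕ) (b : Bool) (y : ℕ → Bool) :
    seg (emb n b y) (n+1) = List.replicate n false ++ [true] := by
  rw [seg_succ, seg_emb_le b y le_rfl, emb_self]

theorem seg_emb_two (n : ℕ) (b : Bool) (y : ℕ → Bool) :
    seg (emb n b y) (n+2) = List.replicate n false ++ [true, b] := by
  rw [seg_succ, seg_emb_one, emb_succ]
  simp

theorem seg_emb (n : ℕ) (b : Bool) (y : ℕ → Bool) (m : ℕ) :
    seg (emb n b y) (n + 2 + m) = List.replicate n false ++ true :: b :: seg y m := by
  induction m with
  | zero =>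
      have : n + 2 + 0 = n + 2 := by omega
      rw [this, seg_emb_two]
      simp [seg]
  | succ m ih =>
      have : n + 2 + (m+1) = (n + 2 + m) + 1 := by omega
      rw [this, seg_succ, ih, emb_tail, seg_succ]
      simp

theorem dec_seg_emb_le {n : ℕ} (b : Bool) (y : ℕ → Bool) {m : ℕ} (h : m ≤ n) :
    dec (seg (emb n b y) m) = [] := by
  rw [seg_emb_le b y h, dec_replicate]

theorem dec_seg_emb_one (n : ℕ) (b : Bool) (y : ℕ → Bool) :
    dec (seg (emb n b y) (n+1)) = [n] := by
  rw [seg_emb_one, dec_block1]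

theorem dec_seg_emb (n : ℕ) (b : Bool) (y : ℕ → Bool) (m : ℕ) :
    dec (seg (emb n b y) (n + 2 + m)) = n :: dec (seg y m) := by
  rw [seg_emb, dec_block]

theorem emb_ne_zfun (n : ℕ) (b : Bool) (y : ℕ → Bool) : emb n b y ≠ zfun := by
  intro h
  have := congrFun h n
  simp [zfun] at this

theorem emb_inj {n n' : ℕ} {b b' : Bool} {y y' : ℕ → Bool}
    (h : emb n b y = emb n' b' y') : n = n' ∧ b = b' ∧ y = y' := by
  have hn : n = n' := by
    by_contra hne
    rcases Nat.lt_or_ge n n' with h1 | h1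
    · have := congrFun h n
      rw [emb_self, emb_lt h1] at this
      exact Bool.true_eq_false.mp this
    · have h1' : n' < n := by omega
      have := congrFun h n'
      rw [emb_lt h1', emb_self] at this
      exact Bool.true_eq_false.mp this.symm
  subst hn
  refine ⟨rfl, ?_, ?_⟩
  · have := congrFun h (n+1)
    simpa using this
  · funext i
    have := congrFun h (n + 2 + i)
    simpa using this

theorem exists_emb {x : ℕ → Bool} (hx : x ≠ zfun) :
    ∃ n b y, x = emb n b y := by
  have hex : ∃ i, x i = true := by
    by_contra hc
    push_neg at hc
    exact hx (funext fun i => by simpa [zfun] using hc i)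
  classical
  let n := Nat.find hex
  refine ⟨n, x (n+1), fun i => x (n + 2 + i), ?_⟩
  funext i
  by_cases h1 : i < n
  · rw [emb_lt h1]
    have := Nat.find_min hex h1
    simpa using this
  · by_cases h2 : i = n
    · subst h2; rw [emb_self]; exact Nat.find_spec hex
    · by_cases h3 : i = n + 1
      · subst h3; simp
      · have : ∃ j, i = n + 2 + j := ⟨i - n - 2, by omega⟩
        obtain ⟨j, rfl⟩ := this
        simp

theorem P1 {A : Set (List ℕ)} : zfun ∈ CC A ↔ [] ∈ A := by
  constructor
  · intro h
    have := h 0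
    simpa [seg, dec, go] using this
  · intro h m
    rw [seg_zfun, dec_replicate]
    exact h

theorem subAt_PC {A : Set (List ℕ)} (hA : PC A) (n : ℕ) : PC (subAt A n) := by
  intro σ τ hσ hτ
  exact hA (n :: σ) (n :: τ) hσ ((List.prefix_cons_inj n).mpr hτ)

theorem P2 {A : Set (List ℕ)} (hA : PC A) (n : ℕ) (b : Bool) (y : ℕ → Bool) :
    emb n b y ∈ CC A ↔ y ∈ CC (subAt A n) := by
  constructor
  · intro h m
    have := h (n + 2 + m)
    rwa [dec_seg_emb] at this
  · intro h m
    have h0 : [n] ∈ A := h 0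
    rcases Nat.lt_or_ge m (n+1) with h1 | h1
    · rw [dec_seg_emb_le b y (by omega)]
      exact hA [n] [] h0 (List.nil_prefix)
    · rcases Nat.eq_or_lt_of_le h1 with h2 | h2
      · rw [← h2, dec_seg_emb_one]
        exact h0
      · have : ∃ j, m = n + 2 + j := ⟨m - n - 2, by omega⟩
        obtain ⟨j, rfl⟩ := this
        rw [dec_seg_emb]
        exact h j

end CBP

namespace CBP

theorem isOpen_seg_eq (m : ℕ) (u : List Bool) : IsOpen {x : ℕ → Bool | seg x m = u} := by
  by_cases h : u.length = m
  · have : {x : ℕ → Bool | seg x m = u} = ⋂ i : Fin m, (fun x : ℕ → Bool => x (i:ℕ)) ⁻¹' {u.get ⟨i, by omega⟩} := by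
      ext x
      simp only [mem_setOf_eq, mem_iInter, mem_preimage, mem_singleton_iff]
      constructor
      · intro hx i
        have := congrArg (fun l => l[(i:ℕ)]?) hx
        simp [seg, List.getElem?_ofFn, i.2] at this
        rw [List.getElem?_eq_getElem (by omega : (i:ℕ) < u.length)] at this
        simpa [List.get_eq_getElem] using this
      · intro hx
        apply List.ext_getElem (by simp [h])
        intro i h1 h2
        simp only [seg, List.getElem_ofFn]
        have := hx ⟨i, by simpa using h1⟩
        simpa [List.get_eq_getElem] using this
    rw [this]
    exact isOpen_iInter_of_finite fun i =>
      IsOpen.preimage (continuous_apply (i : ℕ)) (isOpen_discrete _)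
  · have : {x : ℕ → Bool | seg x m = u} = ∅ := by
      ext x
      simp only [mem_setOf_eq, mem_empty_iff_false, iff_false]
      intro hx
      exact h (by rw [← hx]; simp)
    rw [this]
    exact isOpen_empty

theorem isClosed_seg_eq (m : ℕ) (u : List Bool) : IsClosed {x : ℕ → Bool | seg x m = u} := by
  have : {x : ℕ → Bool | seg x m = u} = (⋃ v ∈ {v : List Bool | v.length = m ∧ v ≠ u}, {x : ℕ → Bool | seg x m = v})ᶜ := by
    ext x
    simp only [mem_setOf_eq, mem_compl_iff, mem_iUnion]
    constructor
    · rintro h ⟨v, ⟨_, hne⟩, hv⟩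
      exact hne (hv ▸ h ▸ rfl)
    · intro h
      by_contra hne
      exact h ⟨seg x m, ⟨by simp, fun he => hne he⟩, rfl⟩
  rw [this]
  exact (isOpen_biUnion fun v _ => isOpen_seg_eq m v).isClosed_compl

/-- basis lemma -/
theorem exists_seg_subset {U : Set (ℕ → Bool)} (hU : IsOpen U) {x : ℕ → Bool} (hx : x ∈ U) :
    ∃ m, {x' | seg x' m = seg x m} ⊆ U := by
  rw [isOpen_pi_iff] at hU
  obtain ⟨I, u, h1, h2⟩ := hU x hx
  refine ⟨I.sup id + 1, fun x' hx' => h2 ?_⟩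
  intro a ha
  have hlt : a < I.sup id + 1 := Nat.lt_succ_of_le (Finset.le_sup (f := id) ha)
  have : x' a = x a := seg_eq_iff.mp hx' a hlt
  rw [this]
  exact (h1 a ha).2

theorem continuous_emb (n : ℕ) (b : Bool) : Continuous fun y : ℕ → Bool => emb n b y := by
  apply continuous_pi
  intro i
  unfold emb
  split_ifs
  · exact continuous_const
  · exact continuous_const
  · exact continuous_const
  · exact continuous_apply _

def tailf (n : ℕ) (x : ℕ → Bool) : ℕ → Bool := fun i => x (n + 2 + i)

theorem continuous_tailf (n : ℕ) : Continuous (tailf n) := by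
  apply continuous_pi
  intro i
  exact continuous_apply _

@[simp] theorem tailf_emb (n : ℕ) (b : Bool) (y : ℕ → Bool) : tailf n (emb n b y) = y := by
  funext i
  simp [tailf]

end CBP

namespace CBP

theorem infinite_nat_iff {s : Set ℕ} : s.Infinite ↔ ∀ m, ∃ n, m ≤ n ∧ n ∈ s := by
  constructor
  · intro h m
    by_contra hc
    push_neg at hc
    exact h (((Set.finite_Iio m).subset (fun n hn => by
      by_contra h2
      exact hc n (by simpa using h2) hn)))
  · intro h
    intro hfin
    obtain ⟨b, hb⟩ := hfin.bddAbove
    obtain ⟨n, hn, hns⟩ := h (b+1)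
    exact absurd (hb hns) (by omega)

def derOn (C : Set (ℕ → Bool)) : Set (ℕ → Bool) := {x | x ∈ C ∧ ¬ IsIsolatedIn C x}

noncomputable def derIter (C : Set (ℕ → Bool)) (α : Ordinal) : Set (ℕ → Bool) :=
  Ordinal.limitRecOn (motive := fun _ => Set (ℕ → Bool)) α C
    (fun _ P => derOn P)
    (fun o _ IH => ⋂ (β : Ordinal), ⋂ (h : β < o), IH β h)

@[simp] theorem derIter_zero (C : Set (ℕ → Bool)) : derIter C 0 = C :=
  Ordinal.limitRecOn_zero _ _ _

@[simp] theorem derIter_succ (C : Set (ℕ → Bool)) (β : Ordinal) :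
    derIter C (Order.succ β) = derOn (derIter C β) :=
  Ordinal.limitRecOn_succ _ _ _ _

theorem derIter_limit (C : Set (ℕ → Bool)) {β : Ordinal} (h : Order.IsSuccLimit β) :
    derIter C β = ⋂ (γ : Ordinal), ⋂ (_ : γ < β), derIter C γ :=
  Ordinal.limitRecOn_limit _ _ _ _ h

theorem derOn_subset (C : Set (ℕ → Bool)) : derOn C ⊆ C := fun _ h => h.1

theorem derIter_anti (C : Set (ℕ → Bool)) : ∀ {β γ : Ordinal}, γ ≤ β →
    derIter C β ⊆ derIter C γ := by
  intro β
  induction β using Ordinal.induction with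
  | h β ih =>
    rcases Ordinal.zero_or_succ_or_isSuccLimit β with h0 | ⟨β', rfl⟩ | hlim
    · subst h0
      intro γ hγ
      rw [nonpos_iff_eq_zero.mp hγ]
    · intro γ hγ
      rcases eq_or_lt_of_le hγ with rfl | hlt
      · exact subset_rfl
      · have h1 : γ ≤ β' := Order.lt_succ_iff.mp hlt
        calc derIter C (Order.succ β') ⊆ derIter C β' := by
              rw [derIter_succ]; exact derOn_subset _
          _ ⊆ derIter C γ := ih β' (Order.lt_succ β') h1
    · intro γ hγ
      rcases eq_or_lt_of_le hγ with rfl | hlt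
      · exact subset_rfl
      · rw [derIter_limit C hlim]
        exact fun x hx => by
          simp only [mem_iInter] at hx
          exact hx γ hlt

theorem derOn_isClosed {C : Set (ℕ → Bool)} (hC : IsClosed C) : IsClosed (derOn C) := by
  rw [← isOpen_compl_iff]
  rw [isOpen_iff_forall_mem_open]
  intro x hx
  by_cases hxC : x ∈ C
  · have hiso : IsIsolatedIn C x := by
      by_contra h
      exact hx ⟨hxC, h⟩
    obtain ⟨U, hU, hUC⟩ := hiso
    refine ⟨U, ?_, hU, ?_⟩
    · intro z hz
      intro hzd
      have : z ∈ U ∩ C := ⟨hz, hzd.1⟩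
      rw [hUC] at this
      rw [this] at hzd
      exact hzd.2 ⟨U, hU, hUC⟩
    · have : x ∈ U ∩ C := hUC ▸ rfl
      exact this.1
  · exact ⟨Cᶜ, fun z hz hzd => hz hzd.1, hC.isOpen_compl, hxC⟩

theorem derIter_isClosed {C : Set (ℕ → Bool)} (hC : IsClosed C) (β : Ordinal) :
    IsClosed (derIter C β) := by
  induction β using Ordinal.induction with
  | h β ih =>
    rcases Ordinal.zero_or_succ_or_isSuccLimit β with h0 | ⟨β', rfl⟩ | hlim
    · subst h0; simpa using hC
    · rw [derIter_succ]
      exact derOn_isClosed (ih β' (Order.lt_succ β'))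
    · rw [derIter_limit C hlim]
      exact isClosed_iInter fun γ => isClosed_iInter fun hγ => ih γ hγ

end CBP

namespace CBP

def ZZ (A : Set (List ℕ)) (β : Ordinal) : Prop :=
  [] ∈ A ∧ ∀ γ < β, {n | (derIter (CC (subAt A n)) γ).Nonempty}.Infinite

def locSet (A : Set (List ℕ)) (β : Ordinal) : Set (ℕ → Bool) :=
  {x | (x = zfun ∧ ZZ A β) ∨ ∃ n b y, x = emb n b y ∧ y ∈ derIter (CC (subAt A n)) β}

theorem ZZ_mono {A : Set (List ℕ)} {β γ : Ordinal} (h : γ ≤ β) (hZ : ZZ A β) : ZZ A γ :=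
  ⟨hZ.1, fun δ hδ => hZ.2 δ (hδ.trans_le h)⟩

theorem ZZ_succ {A : Set (List ℕ)} {β : Ordinal} :
    ZZ A (Order.succ β) ↔
      ZZ A β ∧ {n | (derIter (CC (subAt A n)) β).Nonempty}.Infinite := by
  constructor
  · intro h
    exact ⟨ZZ_mono (Order.le_succ β) h, h.2 β (Order.lt_succ β)⟩
  · rintro ⟨⟨h0, h1⟩, h2⟩
    refine ⟨h0, fun γ hγ => ?_⟩
    rcases (Order.lt_succ_iff.mp hγ).lt_or_eq with h | rfl
    · exact h1 γ h
    · exact h2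

theorem ZZ_limit {A : Set (List ℕ)} {β : Ordinal} (hβ : Order.IsSuccLimit β) :
    ZZ A β ↔ ∀ γ < β, ZZ A γ := by
  constructor
  · intro h γ hγ
    exact ZZ_mono hγ.le h
  · intro h
    refine ⟨(h 0 hβ.pos).1, fun γ hγ => ?_⟩
    exact (h (Order.succ γ) (hβ.succ_lt hγ)).2 γ (Order.lt_succ γ)

theorem loc {A : Set (List ℕ)} (hA : PC A) : ∀ β, derIter (CC A) β = locSet A β := by
  intro β
  induction β using Ordinal.induction with
  | h β ih =>
    rcases Ordinal.zero_or_succ_or_isSuccLimit β with rfl | ⟨β', rfl⟩ | hlim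
    · rw [derIter_zero]
      ext x
      constructor
      · intro hx
        by_cases hx0 : x = zfun
        · subst hx0
          exact Or.inl ⟨rfl, P1.mp hx, fun γ hγ => absurd hγ (not_lt.mpr (zero_le : 0 ≤ γ))⟩
        · obtain ⟨n, b, y, rfl⟩ := exists_emb hx0
          exact Or.inr ⟨n, b, y, rfl, by rw [derIter_zero]; exact (P2 hA n b y).mp hx⟩
      · rintro (⟨rfl, hZ⟩ | ⟨n, b, y, rfl, hy⟩)
        · exact P1.mpr hZ.1
        · rw [derIter_zero] at hy
          exact (P2 hA n b y).mpr hy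
    · have hD := ih β' (Order.lt_succ β')
      rw [derIter_succ, hD]
      ext x
      constructor
      · rintro ⟨hxD, hni⟩
        rcases hxD with ⟨rfl, hZ⟩ | ⟨n, b, y, rfl, hy⟩
        · refine Or.inl ⟨rfl, ZZ_succ.mpr ⟨hZ, ?_⟩⟩
          rw [infinite_nat_iff]
          intro m
          by_contra hc
          push_neg at hc
          apply hni
          refine ⟨{x' | seg x' m = seg zfun m}, isOpen_seg_eq m _, ?_⟩
          ext z
          simp only [mem_inter_iff, mem_setOf_eq, mem_singleton_iff]
          constructor
          · rintro ⟨hz1, hz2⟩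
            rcases hz2 with ⟨rfl, _⟩ | ⟨n, b, y, rfl, hy⟩
            · rfl
            · exfalso
              have hnm : m ≤ n := by
                by_contra hlt
                have h5 := seg_eq_iff.mp hz1 n (by omega)
                rw [emb_self] at h5
                simp [zfun] at h5
              exact hc n hnm ⟨y, hy⟩
          · rintro rfl
            exact ⟨rfl, Or.inl ⟨rfl, hZ⟩⟩
        · refine Or.inr ⟨n, b, y, rfl, ?_⟩
          rw [derIter_succ]
          refine ⟨hy, ?_⟩
          rintro ⟨V, hV, hVP⟩
          apply hni
          refine ⟨{z | seg z (n+2) = List.replicate n false ++ [true, b]} ∩ tailf n ⁻¹' V,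
            (isOpen_seg_eq _ _).inter (hV.preimage (continuous_tailf n)), ?_⟩
          ext z
          simp only [mem_inter_iff, mem_setOf_eq, mem_preimage, mem_singleton_iff]
          constructor
          · rintro ⟨⟨hz1, hz2⟩, hzD⟩
            have hagree : ∀ i < n + 2, z i = emb n b y i :=
              seg_eq_iff.mp (by rw [hz1, seg_emb_two])
            rcases hzD with ⟨rfl, _⟩ | ⟨n1, b1, y1, rfl, hy1⟩
            · exfalso
              have h20 := hagree n (by omega)
              rw [emb_self] at h20
              simp [zfun] at h20
            · have hn1 : n1 = n := by
                by_contra hne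
                rcases Nat.lt_or_ge n1 n with h1 | h1
                · have h21 := hagree n1 (by omega)
                  rw [emb_self, emb_lt h1] at h21
                  simp at h21
                · have h1' : n < n1 := by omega
                  have h21 := hagree n (by omega)
                  rw [emb_self, emb_lt h1'] at h21
                  simp at h21
              subst hn1
              have hb1 : b1 = b := by
                have h22 := hagree (n1+1) (by omega)
                rw [emb_succ, emb_succ] at h22
                exact h22
              subst hb1
              have hy1y : y1 = y := by
                have h6 : y1 ∈ V ∩ derIter (CC (subAt A n1)) β' := by
                  refine ⟨?_, hy1⟩
                  have h23 := hz2
                  rwa [tailf_emb] at h23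
                rw [hVP] at h6
                exact h6
              rw [hy1y]
          · rintro rfl
            have hyV : y ∈ V := by
              have h7 : y ∈ V ∩ derIter (CC (subAt A n)) β' := by rw [hVP]; rfl
              exact h7.1
            exact ⟨⟨seg_emb_two n b y, by rwa [tailf_emb]⟩, Or.inr ⟨n, b, y, rfl, hy⟩⟩
      · rintro (⟨rfl, hZ⟩ | ⟨n, b, y, rfl, hy⟩)
        · obtain ⟨hZβ, hinf⟩ := ZZ_succ.mp hZ
          refine ⟨Or.inl ⟨rfl, hZβ⟩, ?_⟩
          rintro ⟨U, hU, hUD⟩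
          have hzU : zfun ∈ U := by
            have : zfun ∈ U ∩ locSet A β' := by rw [hUD]; rfl
            exact this.1
          obtain ⟨m, hm⟩ := exists_seg_subset hU hzU
          obtain ⟨n, hn, hne⟩ := infinite_nat_iff.mp hinf m
          obtain ⟨y, hy⟩ := hne
          have hemb : emb n false y ∈ U := by
            apply hm
            rw [mem_setOf_eq, seg_emb_le false y hn, seg_zfun]
          have h8 : emb n false y ∈ U ∩ locSet A β' :=
            ⟨hemb, Or.inr ⟨n, false, y, rfl, hy⟩⟩
          rw [hUD] at h8
          exact emb_ne_zfun n false y h8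
        · rw [derIter_succ] at hy
          obtain ⟨hyP, hyni⟩ := hy
          refine ⟨Or.inr ⟨n, b, y, rfl, hyP⟩, ?_⟩
          rintro ⟨U, hU, hUD⟩
          apply hyni
          refine ⟨(fun y' => emb n b y') ⁻¹' U, hU.preimage (continuous_emb n b), ?_⟩
          ext y'
          simp only [mem_inter_iff, mem_preimage, mem_singleton_iff]
          constructor
          · rintro ⟨hy'U, hy'P⟩
            have h9 : emb n b y' ∈ U ∩ locSet A β' :=
              ⟨hy'U, Or.inr ⟨n, b, y', rfl, hy'P⟩⟩
            rw [hUD] at h9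
            exact (emb_inj h9).2.2
          · rintro rfl
            have h24 : emb n b y' ∈ U := by
              have h10 : emb n b y' ∈ U ∩ locSet A β' := by rw [hUD]; rfl
              exact h10.1
            exact ⟨h24, hyP⟩
    · rw [derIter_limit _ hlim]
      ext x
      simp only [mem_iInter]
      constructor
      · intro h
        by_cases hx0 : x = zfun
        · subst hx0
          refine Or.inl ⟨rfl, (ZZ_limit hlim).mpr fun γ hγ => ?_⟩
          have h11 := h γ hγ
          rw [ih γ hγ] at h11
          rcases h11 with ⟨_, hZ⟩ | ⟨n, b, y, he, _⟩
          · exact hZ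
          · exact absurd he.symm (emb_ne_zfun n b y)
        · obtain ⟨n, b, y, rfl⟩ := exists_emb hx0
          refine Or.inr ⟨n, b, y, rfl, ?_⟩
          rw [derIter_limit _ hlim]
          simp only [mem_iInter]
          intro γ hγ
          have h12 := h γ hγ
          rw [ih γ hγ] at h12
          rcases h12 with ⟨he, _⟩ | ⟨n', b', y', he, hy'⟩
          · exact absurd he (emb_ne_zfun n b y)
          · obtain ⟨rfl, rfl, rfl⟩ := emb_inj he
            exact hy'
      · rintro (⟨rfl, hZ⟩ | ⟨n, b, y, rfl, hy⟩) γ hγ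
        · rw [ih γ hγ]
          exact Or.inl ⟨rfl, ZZ_mono hγ.le hZ⟩
        · rw [ih γ hγ]
          exact Or.inr ⟨n, b, y, rfl, derIter_anti _ hγ.le hy⟩

end CBP

namespace CBP

theorem CC_empty : CC ∅ = ∅ := by
  ext x
  simp only [CC, mem_setOf_eq, mem_empty_iff_false, iff_false, not_forall]
  exact ⟨0, fun h => h⟩

theorem derIter_empty (β : Ordinal) : derIter ∅ β = ∅ := by
  have := derIter_anti (∅ : Set (ℕ → Bool)) (zero_le : 0 ≤ β)
  rw [derIter_zero] at this
  exact eq_empty_of_subset_empty this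

theorem main {A : Set (List ℕ)} {α : Ordinal} (h : LsRank A α) :
    PC A → (CC A).Countable ∧ IsLeast {β | derIter (CC A) β = ∅} α := by
  induction h with
  | empty =>
      intro _
      rw [CC_empty]
      exact ⟨countable_empty, ⟨show derIter (∅ : Set (ℕ → Bool)) 0 = ∅ from derIter_zero _, fun β _ => (zero_le : 0 ≤ β)⟩⟩
  | @node T hT r hsub ih =>
      intro hA
      have IH : ∀ n, (CC (subAt T n)).Countable ∧
          IsLeast {β | derIter (CC (subAt T n)) β = ∅} (r n) :=
        fun n => ih n (subAt_PC hA n)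
      have hempty_iff : ∀ n β, derIter (CC (subAt T n)) β = ∅ ↔ r n ≤ β := by
        intro n β
        constructor
        · intro he
          exact (IH n).2.2 he
        · intro hle
          have h1 : derIter (CC (subAt T n)) (r n) = ∅ := (IH n).2.1
          exact eq_empty_of_subset_empty (h1 ▸ derIter_anti _ hle)
      have hne_iff : ∀ n β, (derIter (CC (subAt T n)) β).Nonempty ↔ β < r n := by
        intro n β
        rw [nonempty_iff_ne_empty, ← not_le, not_iff_not, hempty_iff]
      have hroot : [] ∈ T := by
        obtain ⟨σ, hσ⟩ := Set.nonempty_iff_ne_empty.mpr hT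
        exact hA σ [] hσ (List.nil_prefix)
      set s : Ordinal := ⨆ n, r n with hs
      set L : Ordinal := ⨅ N, ⨆ n, r (N + n) with hL
      have hinf_iff : ∀ γ : Ordinal, {n | γ < r n}.Infinite ↔ γ < L := by
        intro γ
        rw [infinite_nat_iff]
        constructor
        · intro h
          rw [hL, ← Order.succ_le_iff, le_ciInf_iff (OrderBot.bddBelow _)]
          intro N
          obtain ⟨n, hn, hγ⟩ := h N
          rw [Order.succ_le_iff]
          exact hγ.trans_le (by
            have : r n = r (N + (n - N)) := by congr 1; omega
            rw [this]
            exact le_ciSup (Ordinal.bddAbove_range _) (n - N))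
        · intro h m
          have h2 : γ < ⨆ n, r (m + n) := h.trans_le (ciInf_le (OrderBot.bddBelow _) m)
          obtain ⟨n, hn⟩ := (lt_ciSup_iff (Ordinal.bddAbove_range _)).mp h2
          exact ⟨m + n, by omega, hn⟩
      have hZZ_iff : ∀ β, ZZ T β ↔ β ≤ L := by
        intro β
        constructor
        · intro hZ
          by_contra hc
          rw [not_le] at hc
          have h3 := hZ.2 L hc
          have h4 : {n | (derIter (CC (subAt T n)) L).Nonempty} = {n | L < r n} := by
            ext n; exact hne_iff n L
          rw [h4, hinf_iff] at h3
          exact lt_irrefl L h3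
        · intro hle
          refine ⟨hroot, fun γ hγ => ?_⟩
          have h5 : {n | (derIter (CC (subAt T n)) γ).Nonempty} = {n | γ < r n} := by
            ext n; exact hne_iff n γ
          rw [h5, hinf_iff]
          exact hγ.trans_le hle
      have hloc := loc hA
      have hempty : ∀ β, derIter (CC T) β = ∅ ↔ max s (L + 1) ≤ β := by
        intro β
        rw [hloc β]
        constructor
        · intro he
          rw [max_le_iff]
          constructor
          · rw [hs, ciSup_le_iff (Ordinal.bddAbove_range _)]
            intro n
            rw [← hempty_iff n β]
            by_contra hne
            obtain ⟨y, hy⟩ := nonempty_iff_ne_empty.mpr hne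
            have : emb n false y ∈ locSet T β := Or.inr ⟨n, false, y, rfl, hy⟩
            rw [he] at this
            exact this
          · rw [Ordinal.add_one_eq_succ, Order.succ_le_iff, ← not_le, ← hZZ_iff]
            intro hZ
            have : zfun ∈ locSet T β := Or.inl ⟨rfl, hZ⟩
            rw [he] at this
            exact this
        · intro hle
          rw [max_le_iff] at hle
          obtain ⟨hle1, hle2⟩ := hle
          rw [eq_empty_iff_forall_notMem]
          rintro x (⟨rfl, hZ⟩ | ⟨n, b, y, rfl, hy⟩)
          · rw [hZZ_iff] at hZ
            rw [Ordinal.add_one_eq_succ, Order.succ_le_iff] at hle2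
            exact absurd (hZ.trans_lt hle2) (lt_irrefl β)
          · have h6 : r n ≤ β := le_trans (le_ciSup (Ordinal.bddAbove_range _) n) hle1
            rw [← hempty_iff n β] at h6
            rw [h6] at hy
            exact hy
      refine ⟨?_, ⟨(hempty _).mpr le_rfl, fun β hβ => (hempty β).mp hβ⟩⟩
      · have hsub1 : CC T ⊆ {zfun} ∪ ⋃ n, ⋃ b, (emb n b) '' (CC (subAt T n)) := by
          intro x hx
          by_cases hx0 : x = zfun
          · exact Or.inl hx0
          · obtain ⟨n, b, y, rfl⟩ := exists_emb hx0
            exact Or.inr (mem_iUnion.mpr ⟨n, mem_iUnion.mpr ⟨b,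
              mem_image_of_mem _ ((P2 hA n b y).mp hx)⟩⟩)
        exact Countable.mono hsub1 ((countable_singleton _).union
          (countable_iUnion fun n => countable_iUnion fun b => ((IH n).1).image _))

end CBP

namespace CBP

def pref (Y : Set (ℕ → Bool)) : Set (List Bool) := {σ | ∃ x ∈ Y, ∃ n, σ = seg x n}

theorem pref_empty_iff {Y : Set (ℕ → Bool)} : pref Y = ∅ ↔ Y = ∅ := by
  constructor
  · intro h
    rw [eq_empty_iff_forall_notMem]
    intro y hy
    have : seg y 0 ∈ pref Y := ⟨y, hy, 0, rfl⟩
    rw [h] at this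
    exact this
  · rintro rfl
    rw [eq_empty_iff_forall_notMem]
    rintro σ ⟨x, hx, -⟩
    exact hx

theorem isClosed_seg_mem (n : ℕ) (S : Set (List Bool)) : IsClosed {x : ℕ → Bool | seg x n ∈ S} := by
  rw [← isOpen_compl_iff]
  have : {x : ℕ → Bool | seg x n ∈ S}ᶜ = ⋃ u ∈ {u : List Bool | u ∉ S}, {x : ℕ → Bool | seg x n = u} := by
    ext x
    simp only [mem_compl_iff, mem_setOf_eq, mem_iUnion]
    constructor
    · intro h
      exact ⟨seg x n, h, rfl⟩
    · rintro ⟨u, hu, hx⟩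
      rw [hx]
      exact hu
  rw [this]
  exact isOpen_biUnion fun u _ => isOpen_seg_eq n u

theorem branches_eq (S : Set (List Bool)) : branches S = ⋂ n, {x : ℕ → Bool | seg x n ∈ S} := by
  ext x
  simp only [branches, mem_setOf_eq, mem_iInter]
  rfl

theorem branches_isClosed (S : Set (List Bool)) : IsClosed (branches S) := by
  rw [branches_eq]
  exact isClosed_iInter fun n => isClosed_seg_mem n S

theorem mem_closure_char {Y : Set (ℕ → Bool)} {x : ℕ → Bool} :
    x ∈ closure Y ↔ ∀ n, ∃ y ∈ Y, seg y n = seg x n := by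
  constructor
  · intro h n
    rw [mem_closure_iff] at h
    obtain ⟨y, hy1, hy2⟩ := h {x' | seg x' n = seg x n} (isOpen_seg_eq n _) rfl
    exact ⟨y, hy2, hy1⟩
  · intro h
    rw [mem_closure_iff]
    intro U hU hxU
    obtain ⟨m, hm⟩ := exists_seg_subset hU hxU
    obtain ⟨y, hy, hseg⟩ := h m
    exact ⟨y, hm hseg, hy⟩

theorem mem_pref_iff {Y : Set (ℕ → Bool)} {x : ℕ → Bool} {n : ℕ} :
    seg x n ∈ pref Y ↔ ∃ y ∈ Y, seg y n = seg x n := by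
  constructor
  · rintro ⟨y, hy, m, hm⟩
    have hlen : n = m := by
      have := congrArg List.length hm
      simpa using this
    subst hlen
    exact ⟨y, hy, hm.symm⟩
  · rintro ⟨y, hy, hseg⟩
    exact ⟨y, hy, n, hseg.symm⟩

theorem branches_pref {Y : Set (ℕ → Bool)} (hY : IsClosed Y) : branches (pref Y) = Y := by
  ext x
  constructor
  · intro h
    have : ∀ n, ∃ y ∈ Y, seg y n = seg x n := fun n => mem_pref_iff.mp (h n)
    rw [← hY.closure_eq]
    exact mem_closure_char.mpr this
  · intro h n
    exact ⟨x, h, n, rfl⟩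

theorem CBDer_eq (S : Set (List Bool)) : CBDer S = pref (derOn (branches S)) := by
  ext σ
  constructor
  · rintro ⟨x, h1, h2, n, h3⟩
    exact ⟨x, ⟨h1, h2⟩, n, h3⟩
  · rintro ⟨x, ⟨h1, h2⟩, n, h3⟩
    exact ⟨x, h1, h2, n, h3⟩

theorem branches_CBDer (S : Set (List Bool)) : branches (CBDer S) = derOn (branches S) := by
  rw [CBDer_eq]
  exact branches_pref (derOn_isClosed (branches_isClosed S))

@[simp] theorem CBIter_zero (S : Set (List Bool)) : CBIter S 0 = S :=
  Ordinal.limitRecOn_zero _ _ _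

@[simp] theorem CBIter_succ (S : Set (List Bool)) (β : Ordinal) :
    CBIter S (Order.succ β) = CBDer (CBIter S β) :=
  Ordinal.limitRecOn_succ _ _ _ _

theorem CBIter_limit (S : Set (List Bool)) {β : Ordinal} (h : Order.IsSuccLimit β) :
    CBIter S β = ⋂ (γ : Ordinal), ⋂ (_ : γ < β), CBIter S γ :=
  Ordinal.limitRecOn_limit _ _ _ _ h

theorem branches_iInter {ι : Sort*} (S : ι → Set (List Bool)) :
    branches (⋂ i, S i) = ⋂ i, branches (S i) := by
  ext x
  simp only [branches, mem_setOf_eq, mem_iInter]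
  exact forall_comm

theorem branches_CBIter (S : Set (List Bool)) (β : Ordinal) :
    branches (CBIter S β) = derIter (branches S) β := by
  induction β using Ordinal.induction with
  | h β ih =>
    rcases Ordinal.zero_or_succ_or_isSuccLimit β with rfl | ⟨β', rfl⟩ | hlim
    · simp
    · rw [CBIter_succ, derIter_succ, branches_CBDer, ih β' (Order.lt_succ β')]
    · rw [CBIter_limit S hlim, derIter_limit _ hlim, branches_iInter]
      refine iInter_congr fun γ => ?_
      rw [branches_iInter]
      exact iInter_congr fun hγ => ih γ hγ

theorem CBDer_subset (S : Set (List Bool)) : CBDer S ⊆ S := by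
  rintro σ ⟨x, h1, -, n, rfl⟩
  exact h1 n

theorem CBIter_anti (S : Set (List Bool)) : ∀ {β γ : Ordinal}, γ ≤ β →
    CBIter S β ⊆ CBIter S γ := by
  intro β
  induction β using Ordinal.induction with
  | h β ih =>
    rcases Ordinal.zero_or_succ_or_isSuccLimit β with rfl | ⟨β', rfl⟩ | hlim
    · intro γ hγ
      rw [nonpos_iff_eq_zero.mp hγ]
    · intro γ hγ
      rcases eq_or_lt_of_le hγ with rfl | hlt
      · exact subset_rfl
      · have h1 : γ ≤ β' := Order.lt_succ_iff.mp hlt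
        calc CBIter S (Order.succ β') ⊆ CBIter S β' := by
              rw [CBIter_succ]; exact CBDer_subset _
          _ ⊆ CBIter S γ := ih β' (Order.lt_succ β') h1
    · intro γ hγ
      rcases eq_or_lt_of_le hγ with rfl | hlt
      · exact subset_rfl
      · rw [CBIter_limit S hlim]
        exact fun x hx => by
          simp only [mem_iInter] at hx
          exact hx γ hlt

theorem CBIter_succ_pref (S : Set (List Bool)) (β : Ordinal) :
    CBIter S (Order.succ β) = pref (derIter (branches S) (Order.succ β)) := by
  rw [CBIter_succ, CBDer_eq, branches_CBIter, derIter_succ]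

theorem CBIter_limit_pref (S : Set (List Bool)) {β : Ordinal} (hlim : Order.IsSuccLimit β) :
    CBIter S β = pref (derIter (branches S) β) := by
  apply Set.Subset.antisymm
  · intro σ hσ
    rw [CBIter_limit S hlim] at hσ
    simp only [mem_iInter] at hσ
    have hmem : ∀ γ (_ : γ < β), σ ∈ pref (derIter (branches S) (Order.succ γ)) := by
      intro γ hγ
      rw [← CBIter_succ_pref]
      exact hσ _ (hlim.succ_lt hγ)
    have : Nonempty {γ : Ordinal // γ < β} := ⟨⟨0, hlim.pos⟩⟩
    set K : {γ : Ordinal // γ < β} → Set (ℕ → Bool) :=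
      fun γ => derIter (branches S) (Order.succ γ.1) ∩ {x | seg x σ.length = σ} with hK
    have hKne : ∀ γ, (K γ).Nonempty := by
      rintro ⟨γ, hγ⟩
      obtain ⟨x, hx, n, hn⟩ := hmem γ hγ
      have hlen : σ.length = n := by rw [hn]; simp
      refine ⟨x, hx, ?_⟩
      rw [mem_setOf_eq, hlen, ← hn]
    have hKcl : ∀ γ, IsClosed (K γ) :=
      fun γ => ((derIter_isClosed (branches_isClosed S) _).inter (isClosed_seg_eq _ _))
    have hKdir : Directed (· ⊇ ·) K := by
      intro i j
      refine ⟨⟨max i.1 j.1, max_lt i.2 j.2⟩, ?_, ?_⟩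
      · exact inter_subset_inter_left _ (derIter_anti _ (Order.succ_le_succ (le_max_left _ _)))
      · exact inter_subset_inter_left _ (derIter_anti _ (Order.succ_le_succ (le_max_right _ _)))
    obtain ⟨x, hx⟩ := IsCompact.nonempty_iInter_of_directed_nonempty_isCompact_isClosed
      K hKdir hKne (fun γ => (hKcl γ).isCompact) hKcl
    simp only [mem_iInter, hK, mem_inter_iff, mem_setOf_eq] at hx
    have hxd : x ∈ derIter (branches S) β := by
      rw [derIter_limit _ hlim]
      simp only [mem_iInter]
      intro γ hγ
      exact derIter_anti _ (Order.le_succ γ) ((hx ⟨γ, hγ⟩).1)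
    exact ⟨x, hxd, σ.length, ((hx ⟨0, hlim.pos⟩).2).symm⟩
  · rintro σ ⟨x, hx, n, rfl⟩
    rw [CBIter_limit S hlim]
    simp only [mem_iInter]
    intro γ hγ
    have h1 : seg x n ∈ CBIter S (Order.succ γ) := by
      rw [CBIter_succ_pref]
      exact ⟨x, derIter_anti _ (hlim.succ_lt hγ).le hx, n, rfl⟩
    exact CBIter_anti S (Order.le_succ γ) h1

end CBP

namespace CBP

def SA (A : Set (List ℕ)) : Set (List Bool) := {u | dec u ∈ A}

theorem branches_SA (A : Set (List ℕ)) : branches (SA A) = CC A := rfl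

theorem branches_empty : branches (∅ : Set (List Bool)) = ∅ := by
  rw [eq_empty_iff_forall_notMem]
  intro x hx
  exact hx 0

theorem isLeast_CBIter {S : Set (List Bool)} {α : Ordinal}
    (hl : IsLeast {β | derIter (branches S) β = ∅} α) (hzero : α = 0 → S = ∅) :
    IsLeast {β | CBIter S β = ∅} α := by
  constructor
  · rcases Ordinal.zero_or_succ_or_isSuccLimit α with rfl | ⟨α', rfl⟩ | hlim
    · rw [mem_setOf_eq, CBIter_zero]
      exact hzero rfl
    · rw [mem_setOf_eq, CBIter_succ_pref, hl.1, pref_empty_iff]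
    · rw [mem_setOf_eq, CBIter_limit_pref S hlim, hl.1, pref_empty_iff]
  · intro β hβ
    rcases Ordinal.zero_or_succ_or_isSuccLimit β with rfl | ⟨β', rfl⟩ | hlim
    · have hS : S = ∅ := by rw [← CBIter_zero S]; exact hβ
      have hb : branches S = ∅ := by rw [hS]; exact branches_empty
      exact hl.2 (by rw [mem_setOf_eq, derIter_zero, hb])
    · apply hl.2
      rw [mem_setOf_eq, ← pref_empty_iff (Y := derIter (branches S) (Order.succ β')),
        ← CBIter_succ_pref]
      exact hβ
    · apply hl.2
      rw [mem_setOf_eq, ← pref_empty_iff (Y := derIter (branches S) β),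
        ← CBIter_limit_pref S hlim]
      exact hβ

theorem LsRank_zero_empty {A : Set (List ℕ)} {α : Ordinal} (h : LsRank A α) (h0 : α = 0) :
    A = ∅ := by
  cases h with
  | empty => rfl
  | @node T hT r hsub =>
      exfalso
      have h2 : (⨅ N, ⨆ n, r (N + n)) + 1 ≤ (0 : Ordinal) := h0 ▸ le_max_right _ _
      exact absurd (nonpos_iff_eq_zero.mp h2)
        (by exact Ordinal.succ_ne_zero _)

def Phi (T : TreeSpace) : BinTreeSpace :=
  ⟨fun u => T.1 (dec u),
    fun σ τ h hpre => T.2 (dec σ) (dec τ) h (dec_prefix hpre),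
    fun σ h => ⟨false, show T.1 (dec (σ ++ [false])) = true by rwa [dec_append_false]⟩⟩

theorem continuous_Phi : Continuous Phi := by
  apply Continuous.subtype_mk
  apply continuous_pi
  intro u
  exact (continuous_apply (dec u)).comp continuous_subtype_val

theorem binSet_Phi (T : TreeSpace) : binSet (Phi T) = SA (treeSet T) := rfl

theorem PC_treeSet (T : TreeSpace) : PC (treeSet T) := fun σ τ h hp => T.2 σ τ h hp

theorem SA_empty : SA (∅ : Set (List ℕ)) = ∅ := by
  rw [eq_empty_iff_forall_notMem]
  intro u hu
  exact hu

end CBP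

namespace CBP

def bs (x : ℕ → ℕ) : ℕ → ℕ
  | 0 => 0
  | k+1 => bs x k + (x k + 2)

theorem bs_zero (x : ℕ → ℕ) : bs x 0 = 0 := rfl

theorem bs_succ (x : ℕ → ℕ) (k : ℕ) : bs x (k+1) = bs x k + (x k + 2) := rfl

theorem bs_ge (x : ℕ → ℕ) : ∀ k, k ≤ bs x k := by
  intro k
  induction k with
  | zero => exact Nat.zero_le _
  | succ k ih => rw [bs_succ]; omega

theorem bs_mono (x : ℕ → ℕ) : StrictMono (bs x) :=
  strictMono_nat_of_lt_succ fun k => by rw [bs_succ]; omega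

def blk (x : ℕ → ℕ) (i : ℕ) : ℕ := Nat.findGreatest (fun k => bs x k ≤ i) i

theorem blk_le (x : ℕ → ℕ) (i : ℕ) : bs x (blk x i) ≤ i :=
  Nat.findGreatest_spec (P := fun k => bs x k ≤ i) (n := i) (m := 0)
    (Nat.zero_le i) (Nat.zero_le i)

theorem blk_self_le (x : ℕ → ℕ) (i : ℕ) : blk x i ≤ i := Nat.findGreatest_le i

theorem blk_lt (x : ℕ → ℕ) (i : ℕ) : i < bs x (blk x i + 1) := by
  by_cases h : blk x i + 1 ≤ i
  · by_contra h2
    push_neg at h2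
    exact Nat.findGreatest_is_greatest (Nat.lt_succ_self _) h h2
  · push_neg at h
    calc i < blk x i + 1 := h
      _ ≤ bs x (blk x i + 1) := bs_ge x _

theorem blk_eq (x : ℕ → ℕ) {k i : ℕ} (h1 : bs x k ≤ i) (h2 : i < bs x (k+1)) :
    blk x i = k := by
  apply le_antisymm
  · by_contra h3
    push_neg at h3
    have h4 : bs x (k+1) ≤ bs x (blk x i) := (bs_mono x).monotone h3
    have := blk_le x i
    omega
  · exact Nat.le_findGreatest ((bs_ge x k).trans h1) h1

def J (x : ℕ → ℕ) (y : ℕ → Bool) : ℕ → Bool := fun i =>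
  if i - bs x (blk x i) < x (blk x i) then false
  else if i - bs x (blk x i) = x (blk x i) then true
  else y (blk x i)

theorem continuous_J (x : ℕ → ℕ) : Continuous fun y : ℕ → Bool => J x y := by
  apply continuous_pi
  intro i
  unfold J
  split_ifs
  · exact continuous_const
  · exact continuous_const
  · exact continuous_apply _

theorem bs_shift (x : ℕ → ℕ) (k : ℕ) :
    bs x (k+1) = x 0 + 2 + bs (fun n => x (n+1)) k := by
  induction k with
  | zero => rw [bs_succ, bs_zero, bs_zero]; omega
  | succ k ih => rw [bs_succ, ih, bs_succ]; omega

theorem J_decomp (x : ℕ → ℕ) (y : ℕ → Bool) :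
    J x y = emb (x 0) (y 0) (J (fun n => x (n+1)) (fun n => y (n+1))) := by
  funext i
  have hb0 : bs x 0 = 0 := rfl
  have hb1 : bs x (0+1) = x 0 + 2 := by rw [bs_succ, bs_zero]; omega
  by_cases h1 : i < x 0
  · have hb : blk x i = 0 := blk_eq x (by omega) (by omega)
    rw [emb_lt h1]
    simp only [J, hb, hb0, Nat.sub_zero]
    rw [if_pos h1]
  · by_cases h2 : i = x 0
    · subst h2
      have hb : blk x (x 0) = 0 := blk_eq x (by omega) (by omega)
      rw [emb_self]
      simp only [J, hb, hb0, Nat.sub_zero]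
      simp
    · by_cases h3 : i = x 0 + 1
      · subst h3
        have hb : blk x (x 0 + 1) = 0 := blk_eq x (by omega) (by omega)
        rw [emb_succ]
        simp only [J, hb, hb0, Nat.sub_zero]
        rw [if_neg (by omega), if_neg (by omega)]
      · have h4 : ∃ j, i = x 0 + 2 + j := ⟨i - x 0 - 2, by omega⟩
        obtain ⟨j, rfl⟩ := h4
        rw [emb_tail]
        set x' := fun n => x (n+1) with hx'
        set k := blk x' j with hk
        have h6 : bs x' k ≤ j := by rw [hk]; exact blk_le x' j
        have h7 : j < bs x' (k+1) := by rw [hk]; exact blk_lt x' j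
        have hbs1 : bs x (k+1) = x 0 + 2 + bs x' k := bs_shift x k
        have hbs2 : bs x (k+1+1) = x 0 + 2 + bs x' (k+1) := bs_shift x (k+1)
        have hkk : blk x (x 0 + 2 + j) = k + 1 := blk_eq x (by omega) (by omega)
        have h8 : x 0 + 2 + j - bs x (k+1) = j - bs x' k := by omega
        simp only [J, hkk, h8, ← hk]
        rfl

theorem J_mem_aux : ∀ m (x : ℕ → ℕ) (y : ℕ → Bool) (A : Set (List ℕ)), PC A →
    (∀ n, (List.ofFn fun i : Fin n => x i) ∈ A) → dec (seg (J x y) m) ∈ A := by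
  intro m
  induction m using Nat.strong_induction_on with
  | _ m ih =>
    intro x y A hA hx
    rw [J_decomp]
    by_cases h1 : m ≤ x 0
    · rw [dec_seg_emb_le _ _ h1]
      simpa using hx 0
    · by_cases h2 : m = x 0 + 1
      · subst h2
        rw [dec_seg_emb_one]
        have := hx 1
        simpa [List.ofFn_succ] using this
      · have h4 : ∃ j, m = x 0 + 2 + j := ⟨m - x 0 - 2, by omega⟩
        obtain ⟨j, rfl⟩ := h4
        rw [dec_seg_emb]
        have hx' : ∀ n, (List.ofFn fun i : Fin n => x (i+1)) ∈ subAt A (x 0) := by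
          intro n
          have := hx (n+1)
          rw [List.ofFn_succ] at this
          simpa [subAt] using this
        exact ih j (by omega) _ _ (subAt A (x 0)) (subAt_PC hA _) hx'

theorem J_mem {A : Set (List ℕ)} (hA : PC A) {x : ℕ → ℕ}
    (hx : ∀ n, (List.ofFn fun i : Fin n => x i) ∈ A) (y : ℕ → Bool) : J x y ∈ CC A :=
  fun m => J_mem_aux m x y A hA hx

theorem J_apply_bit (x : ℕ → ℕ) (y : ℕ → Bool) (k : ℕ) :
    J x y (bs x k + x k + 1) = y k := by
  have h1 : bs x (k+1) = bs x k + (x k + 2) := bs_succ x k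
  have hb : blk x (bs x k + x k + 1) = k := blk_eq x (by omega) (by omega)
  simp only [J, hb]
  rw [if_neg (by omega), if_neg (by omega)]

theorem J_agree (x : ℕ → ℕ) {y y' : ℕ → Bool} {m : ℕ} (h : ∀ k < m, y k = y' k) :
    ∀ i < m, J x y i = J x y' i := by
  intro i hi
  have hb : blk x i < m := lt_of_le_of_lt (blk_self_le x i) hi
  simp only [J]
  rw [h (blk x i) hb]

theorem perfect_range_J (x : ℕ → ℕ) : Perfect (Set.range fun y => J x y) ∧
    (Set.range fun y => J x y).Nonempty := by
  refine ⟨⟨?_, ?_⟩, ⟨J x (fun _ => false), Set.mem_range_self _⟩⟩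
  · exact (isCompact_range (continuous_J x)).isClosed
  · intro z hz
    obtain ⟨y, rfl⟩ := hz
    rw [accPt_iff_nhds]
    intro U hU
    obtain ⟨V, hVU, hVopen, hzV⟩ := mem_nhds_iff.mp hU
    obtain ⟨m, hm⟩ := exists_seg_subset hVopen hzV
    set y' := Function.update y m (!(y m)) with hy'
    refine ⟨J x y', ⟨hVU (hm ?_), Set.mem_range_self y'⟩, ?_⟩
    · rw [mem_setOf_eq]
      apply seg_eq_iff.mpr
      intro i hi
      exact J_agree x (fun k hk => Function.update_of_ne (Nat.ne_of_lt hk) _ y) i hi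
    · intro heq
      have h2 := congrFun heq (bs x m + x m + 1)
      simp only [J_apply_bit] at h2
      rw [hy', Function.update_self] at h2
      simp at h2

end CBP

/-- There is a continuous map `T ↦ S_T` from trees on ℕ to pruned binary trees such that:
if `T` is ill-founded then `[S_T]` contains a nonempty perfect set; and if `T` is
well-founded with `|T|_ls = α` then `[S_T]` is countable and the Cantor–Bendixson rank of
`S_T` is `α`. -/
theorem exists_continuous_tree_to_pruned_CB :
    ∃ Φ : TreeSpace → BinTreeSpace, Continuous Φ ∧ ∀ T : TreeSpace,
      (¬ WFTree (treeSet T) →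
        ∃ P : Set (ℕ → Bool), P.Nonempty ∧ Perfect P ∧ P ⊆ branches (binSet (Φ T))) ∧
      (WFTree (treeSet T) → ∀ α : Ordinal, LsRank (treeSet T) α →
        (branches (binSet (Φ T))).Countable ∧
        IsLeast {β : Ordinal | CBIter (binSet (Φ T)) β = ∅} α) := by
  refine ⟨CBP.Phi, CBP.continuous_Phi, fun T => ⟨?_, ?_⟩⟩
  · intro hIF
    simp only [WFTree, not_not] at hIF
    obtain ⟨x, hx⟩ := hIF
    refine ⟨Set.range fun y => CBP.J x y, (CBP.perfect_range_J x).2,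
      (CBP.perfect_range_J x).1, ?_⟩
    rintro z ⟨y, rfl⟩
    exact CBP.J_mem (CBP.PC_treeSet T) hx y
  · intro _ α hα
    have hmain := CBP.main hα (CBP.PC_treeSet T)
    refine ⟨hmain.1, ?_⟩
    apply CBP.isLeast_CBIter (S := binSet (CBP.Phi T))
    · exact hmain.2
    · intro h0
      have hA : treeSet T = ∅ := CBP.LsRank_zero_empty hα h0
      rw [CBP.binSet_Phi, hA, CBP.SA_empty]
end
end
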